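/- arXiv:2005.05637 — 5 statements merged into one kernel-verified Lean document; each statement's English description precedes it below -/
import Mathlib

section
/- Let Λ be an abelian group, C ⊆ Λ∖{0} a positive cone, and (τ,T,≤) a weak stability condition on C. Then for all n ≥ 1 and α_1,…,α_n ∈ C, the coefficient U(α_1,…,α_n;τ,τ) equals 1 if n = 1, and equals 0 if n ≥ 2. -/
/-- `(τ, T, ≤)` is a weak stability condition on the positive cone `C ⊆ Λ∖{0}`:
for all `α, γ ∈ C` (and `β = α + γ`), either `τ(α) ≤ τ(β) ≤ τ(γ)` or
`τ(α) ≥ τ(β) ≥ τ(γ)`. -/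
def WeakStability {Λ T : Type*} [AddCommMonoid Λ] [LinearOrder T]
    (C : Set Λ) (τ : Λ → T) : Prop :=
  ∀ a ∈ C, ∀ g ∈ C,
    (τ a ≤ τ (a + g) ∧ τ (a + g) ≤ τ g) ∨ (τ g ≤ τ (a + g) ∧ τ (a + g) ≤ τ a)

open scoped Classical in
/-- The wall-crossing coefficient `S(α₁,…,αₙ; τ, τ̃)` of Joyce, for the tuple
`α 0, …, α (n-1)`.  It is `(−1)^r` if for every cut `i = 1,…,n−1` either
(a) `τ(αᵢ) ≤ τ(α_{i+1})` and `τ̃(α₁+⋯+αᵢ) > τ̃(α_{i+1}+⋯+αₙ)`, or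
(b) `τ(αᵢ) > τ(α_{i+1})` and `τ̃(α₁+⋯+αᵢ) ≤ τ̃(α_{i+1}+⋯+αₙ)`,
where `r` is the number of cuts satisfying (a); otherwise it is `0`. -/
noncomputable def Scoef {Λ T T' : Type*} [AddCommMonoid Λ] [LinearOrder T] [LinearOrder T']
    (τ : Λ → T) (τ' : Λ → T') (n : ℕ) (α : ℕ → Λ) : ℤ :=
  if ∀ i ∈ Finset.Ico 1 n,
      (τ (α (i - 1)) ≤ τ (α i) ∧
        τ' (∑ j ∈ Finset.Ico i n, α j) < τ' (∑ j ∈ Finset.range i, α j)) ∨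
      (τ (α i) < τ (α (i - 1)) ∧
        τ' (∑ j ∈ Finset.range i, α j) ≤ τ' (∑ j ∈ Finset.Ico i n, α j))
  then (-1) ^ ((Finset.Ico 1 n).filter (fun i =>
      τ (α (i - 1)) ≤ τ (α i) ∧
        τ' (∑ j ∈ Finset.Ico i n, α j) < τ' (∑ j ∈ Finset.range i, α j))).card
  else 0

/-- Given a composition `c` of `n` and a tuple `α`, the tuple of sums of `α` over
the blocks of `c`. -/
def blockSum {Λ : Type*} [AddCommMonoid Λ] {n : ℕ} (α : ℕ → Λ) (c : Composition n) :
    ℕ → Λ :=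
  fun i => ∑ r ∈ Finset.Ico (c.sizeUpTo i) (c.sizeUpTo (i + 1)), α r

open scoped Classical in
/-- The wall-crossing coefficient `U(α₁,…,αₙ; τ, τ̃)` of Joyce, for the tuple
`α 0, …, α (n-1)`: the sum over `1 ≤ l ≤ m ≤ n` and subdivisions
`0 = a₀ < ⋯ < a_m = n` (a composition `c` of `n`) and `0 = b₀ < ⋯ < b_l = m`
(a composition `d` of `m = c.length`) such that, with `βᵢ` the block sums of `α`
under `c` and `γᵢ` the block sums of `β` under `d`, one has `τ(βᵢ) = τ(αⱼ)` for
all `j` in the `i`-th block and `τ̃(γᵢ) = τ̃(α₁+⋯+αₙ)` for all `i`, of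
`((−1)^{l−1}/l) · ∏ᵢ S(β-blocks; τ, τ̃) · ∏ᵢ 1/(aᵢ − a_{i−1})!`. -/
noncomputable def Ucoef {Λ T T' : Type*} [AddCommMonoid Λ] [LinearOrder T] [LinearOrder T']
    (τ : Λ → T) (τ' : Λ → T') (n : ℕ) (α : ℕ → Λ) : ℚ :=
  ∑ c : Composition n, ∑ d : Composition c.length,
    if (∀ i < c.length, ∀ j, c.sizeUpTo i ≤ j → j < c.sizeUpTo (i + 1) →
          τ (blockSum α c i) = τ (α j)) ∧
        (∀ i < d.length,
          τ' (blockSum (blockSum α c) d i) = τ' (∑ r ∈ Finset.range n, α r))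
    then ((-1 : ℚ) ^ (d.length - 1) / (d.length : ℚ))
      * (∏ i ∈ Finset.range d.length,
          ((Scoef τ τ' (d.sizeUpTo (i + 1) - d.sizeUpTo i)
            (fun t => blockSum α c (d.sizeUpTo i + t))) : ℚ))
      * (∏ i ∈ Finset.range c.length,
          (1 : ℚ) / ((c.sizeUpTo (i + 1) - c.sizeUpTo i).factorial : ℚ))
    else 0

open Finset

/-- Exponential-sum over compositions of `n` with `l` parts: `A n l = ∑ 1/∏ kᵢ!`. -/
def Acoef : ℕ → ℕ → ℚ
  | 0, 0 => 1
  | 0, _ + 1 => 0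
  | _ + 1, 0 => 0
  | n + 1, l + 1 => ∑ k ∈ Finset.range (n + 1), Acoef (n - k) l / (Nat.factorial (k + 1))
  termination_by n l => n
  decreasing_by omega

lemma Acoef_zero_right (n : ℕ) (hn : 0 < n) : Acoef n 0 = 0 := by
  obtain ⟨m, rfl⟩ := Nat.exists_eq_succ_of_ne_zero hn.ne'
  simp [Acoef]

lemma Acoef_zero_left (l : ℕ) (hl : 0 < l) : Acoef 0 l = 0 := by
  obtain ⟨m, rfl⟩ := Nat.exists_eq_succ_of_ne_zero hl.ne'
  simp [Acoef]

lemma Acoef_succ (n l : ℕ) :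
    Acoef (n + 1) (l + 1)
      = ∑ k ∈ Finset.range (n + 1), Acoef (n - k) l / (Nat.factorial (k + 1)) := by
  rw [Acoef]

lemma Acoef_vanish : ∀ n l, n < l → Acoef n l = 0 := by
  intro n
  induction n using Nat.strong_induction_on with
  | _ n ih =>
    intro l hl
    match n, l with
    | 0, l + 1 => simp [Acoef]
    | n + 1, l + 1 =>
      rw [Acoef_succ]
      refine Finset.sum_eq_zero fun k hk => ?_
      rw [ih (n - k) (by omega) l (by omega)]
      simp

/-- The key Stirling-type recursion. -/
lemma Acoef_rec : ∀ (n l : ℕ), ((n : ℚ) + 1) * Acoef (n + 1) l = l * (Acoef n l + Acoef n (l - 1)) := by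
  intro n
  induction n using Nat.strong_induction_on with
  | _ n ih =>
    intro l
    match l with
    | 0 => simp [Acoef_zero_right]
    | l + 1 =>
      rw [Acoef_succ, Finset.mul_sum]
      have key : ∀ k ∈ Finset.range (n + 1),
          ((n : ℚ) + 1) * (Acoef (n - k) l / (Nat.factorial (k + 1)))
          = Acoef (n - k) l / (Nat.factorial k)
            + ((n - k : ℕ) : ℚ) * Acoef (n - k) l / (Nat.factorial (k + 1)) := by
        intro k hk
        simp only [Finset.mem_range] at hk
        have hc : ((n - k : ℕ) : ℚ) = (n : ℚ) - k := by
          rw [Nat.cast_sub (by omega)]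
        have h2 : (Nat.factorial (k + 1) : ℚ) = ((k : ℚ) + 1) * Nat.factorial k := by
          rw [Nat.factorial_succ]; push_cast; ring
        have hk0 : ((k : ℚ) + 1) ≠ 0 := by positivity
        have hf : (Nat.factorial k : ℚ) ≠ 0 := by
          exact_mod_cast Nat.factorial_ne_zero k
        rw [hc, h2]
        field_simp
        ring
      rw [Finset.sum_congr rfl key, Finset.sum_add_distrib]
      have first : ∑ k ∈ Finset.range (n + 1), Acoef (n - k) l / (Nat.factorial k)
          = Acoef n l + Acoef n (l + 1) := by
        rw [Finset.sum_range_succ']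
        simp only [Nat.sub_zero, Nat.factorial_zero, Nat.cast_one, div_one]
        rw [add_comm]
        congr 1
        match n with
        | 0 =>
          simp only [Finset.range_zero, Finset.sum_empty]
          exact (Acoef_zero_left _ (Nat.succ_pos _)).symm
        | m + 1 =>
          rw [Acoef_succ]
          refine Finset.sum_congr rfl fun k hk => ?_
          congr 2
          omega
      have second : ∑ k ∈ Finset.range (n + 1),
          ((n - k : ℕ) : ℚ) * Acoef (n - k) l / (Nat.factorial (k + 1))
          = (l : ℚ) * (Acoef n (l + 1) + Acoef n l) := by
        match l with
        | 0 =>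
          rw [Finset.sum_eq_zero, Nat.cast_zero, zero_mul]
          intro k hk
          rcases Nat.eq_zero_or_pos (n - k) with h0 | hpos
          · rw [h0]; simp
          · rw [Acoef_zero_right _ hpos]; simp
        | l + 1 =>
          match n with
          | 0 =>
            rw [Acoef_zero_left _ (Nat.succ_pos _), Acoef_zero_left _ (Nat.succ_pos _)]
            simp
          | m + 1 =>
            rw [Finset.sum_range_succ]
            simp only [Nat.sub_self, Nat.cast_zero, zero_mul, zero_div, add_zero]
            have step : ∀ k ∈ Finset.range (m + 1),
                ((m + 1 - k : ℕ) : ℚ) * Acoef (m + 1 - k) (l + 1) / (Nat.factorial (k + 1))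
                = ((l : ℚ) + 1) * (Acoef (m - k) (l + 1) / (Nat.factorial (k + 1)))
                  + ((l : ℚ) + 1) * (Acoef (m - k) l / (Nat.factorial (k + 1))) := by
              intro k hk
              simp only [Finset.mem_range] at hk
              have h1 : m + 1 - k = (m - k) + 1 := by omega
              rw [h1]
              have h5 := ih (m - k) (by omega) (l + 1)
              have h3 : l + 1 - 1 = l := by omega
              rw [h3] at h5
              push_cast at h5 ⊢
              rw [h5]
              ring
            rw [Finset.sum_congr rfl step, Finset.sum_add_distrib, ← Finset.mul_sum,
              ← Finset.mul_sum, ← Acoef_succ, ← Acoef_succ]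
            push_cast
            ring
      rw [first, second]
      have h3 : l + 1 - 1 = l := by omega
      rw [h3]
      push_cast
      ring

lemma Acoef_one_one : Acoef 1 1 = 1 := by
  rw [show (1:ℕ) = 0 + 1 from rfl, Acoef_succ]
  simp [Acoef]

lemma Asum (n : ℕ) (hn : 1 ≤ n) :
    ∑ l ∈ Finset.range (n + 1), (-1 : ℚ) ^ (l - 1) / l * Acoef n l
      = if n = 1 then 1 else 0 := by
  match n, hn with
  | 1, _ =>
    simp only [if_pos rfl]
    rw [show (1:ℕ) + 1 = 2 from rfl, Finset.sum_range_succ, Finset.sum_range_one]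
    rw [Acoef_zero_right 1 one_pos, Acoef_one_one]
    norm_num
  | (m + 2), _ =>
    have hm : 1 ≤ m + 1 := Nat.succ_le_succ (Nat.zero_le m)
    rw [if_neg (by omega)]
    set S := ∑ l ∈ Finset.range (m + 2 + 1), (-1 : ℚ) ^ (l - 1) / l * Acoef (m + 2) l with hS
    have hAm0 : Acoef (m + 1) 0 = 0 := Acoef_zero_right _ hm
    have hAmtop : Acoef (m + 1) (m + 2) = 0 := Acoef_vanish _ _ (by omega)
    have key : ((m + 1 : ℕ) : ℚ) + 1 ≠ 0 := by positivity
    have hmain : (((m + 1 : ℕ) : ℚ) + 1) * S = 0 := by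
      rw [hS, Finset.mul_sum]
      have step : ∀ l ∈ Finset.range (m + 3),
          (((m + 1 : ℕ) : ℚ) + 1) * ((-1 : ℚ) ^ (l - 1) / l * Acoef (m + 2) l)
          = ((-1 : ℚ) ^ (l - 1) * Acoef (m + 1) (l - 1))
            - ((-1 : ℚ) ^ ((l + 1) - 1) * Acoef (m + 1) ((l + 1) - 1)) := by
        intro l _
        match l with
        | 0 =>
          simp only [Nat.zero_sub, Nat.add_sub_cancel, pow_zero, Nat.cast_zero, div_zero,
            zero_mul, mul_zero]
          rw [hAm0]
          ring
        | j + 1 =>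
          have hrec := Acoef_rec (m + 1) (j + 1)
          have h1 : (j : ℕ) + 1 - 1 = j := by omega
          rw [h1] at hrec
          have h2 : ((j : ℚ) + 1) ≠ 0 := by positivity
          simp only [Nat.add_sub_cancel]
          push_cast at hrec ⊢
          have key' : ((m : ℚ) + 1 + 1) ≠ 0 := by positivity
          have hX : Acoef (m + 1 + 1) (j + 1)
              = ((j : ℚ) + 1) * (Acoef (m + 1) (j + 1) + Acoef (m + 1) j) / ((m : ℚ) + 1 + 1) := by
            rw [eq_div_iff key', mul_comm]
            exact hrec
          rw [show m + 2 = m + 1 + 1 from rfl, hX]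
          field_simp
          ring
      rw [Finset.sum_congr rfl step, Finset.sum_range_sub']
      have h4 : m + 3 - 1 = m + 2 := by omega
      simp [h4, hAm0, hAmtop]
    rcases mul_eq_zero.mp hmain with h | h
    · exact absurd h key
    · exact h



/-- Prepend a block of size `k+1` to a composition of `n - k`. -/
def consComp {n : ℕ} (k : ℕ) (hk : k < n + 1) (c' : Composition (n - k)) :
    Composition (n + 1) where
  blocks := (k + 1) :: c'.blocks
  blocks_pos := by
    intro i hi
    rcases List.mem_cons.mp hi with rfl | h
    · omega
    · exact c'.blocks_pos h
  blocks_sum := by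
    have h := c'.blocks_sum
    simp only [List.sum_cons, h]
    omega

lemma consComp_length {n : ℕ} (k : ℕ) (hk : k < n + 1) (c' : Composition (n - k)) :
    (consComp k hk c').length = c'.length + 1 := by
  simp [consComp, Composition.length]

lemma consComp_sizeUpTo_succ {n : ℕ} (k : ℕ) (hk : k < n + 1) (c' : Composition (n - k))
    (i : ℕ) : (consComp k hk c').sizeUpTo (i + 1) = (k + 1) + c'.sizeUpTo i := by
  simp [consComp, Composition.sizeUpTo, List.take_succ_cons]

/-- The product `∏ 1/kᵢ!` over the blocks of a composition. -/
def Pprod {n : ℕ} (c : Composition n) : ℚ :=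
  ∏ i ∈ Finset.range c.length, (1 : ℚ) / ((c.sizeUpTo (i + 1) - c.sizeUpTo i).factorial)

lemma Pprod_cons {n : ℕ} (k : ℕ) (hk : k < n + 1) (c' : Composition (n - k)) :
    Pprod (consComp k hk c') = (1 / ((k + 1).factorial : ℚ)) * Pprod c' := by
  unfold Pprod
  rw [consComp_length, Finset.prod_range_succ', mul_comm]
  refine congrArg₂ (· * ·) ?_ (Finset.prod_congr rfl fun i _ => ?_)
  · rw [consComp_sizeUpTo_succ, Composition.sizeUpTo_zero]
    simp
  · rw [consComp_sizeUpTo_succ, consComp_sizeUpTo_succ]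
    have h : k + 1 + c'.sizeUpTo (i + 1) - (k + 1 + c'.sizeUpTo i)
        = c'.sizeUpTo (i + 1) - c'.sizeUpTo i := by omega
    rw [h]

lemma comp0_blocks (c : Composition 0) : c.blocks = [] := by
  cases hb : c.blocks with
  | nil => rfl
  | cons a t =>
    exfalso
    have hs := c.blocks_sum
    rw [hb] at hs
    simp only [List.sum_cons] at hs
    have ha : a ∈ c.blocks := by rw [hb]; exact List.mem_cons_self
    have := c.blocks_pos ha
    omega

def tailComp {n k : ℕ} (c : Composition (n + 1)) (h : c.blocks.headI - 1 = k) :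
    Composition (n - k) where
  blocks := c.blocks.tail
  blocks_pos hi := c.blocks_pos (List.mem_of_mem_tail hi)
  blocks_sum := by
    cases hb : c.blocks with
    | nil =>
      exfalso
      have := c.blocks_sum
      rw [hb] at this
      simp at this
    | cons a t =>
      have hs := c.blocks_sum
      have ha : a ∈ c.blocks := by rw [hb]; exact List.mem_cons_self
      have hpos := c.blocks_pos ha
      rw [hb] at h hs
      simp only [List.sum_cons] at hs
      simp only [List.headI] at h
      simp only [List.tail_cons]
      omega

lemma fiber_sum (n k : ℕ) (hk : k < n + 1) (F : Composition (n + 1) → ℚ) :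
    ∑ c ∈ Finset.univ.filter
        (fun c : Composition (n + 1) => c.blocks.headI - 1 = k), F c
    = ∑ c' : Composition (n - k), F (consComp k hk c') := by
  have hne : ∀ c : Composition (n + 1), c.blocks ≠ [] := by
    intro c h
    have := c.blocks_sum
    rw [h] at this
    simp at this
  refine Finset.sum_bij' (i := fun c hc => tailComp c (Finset.mem_filter.mp hc).2)
    (j := fun c' _ => consComp k hk c') ?_ ?_ ?_ ?_ ?_
  · intro c hc
    exact Finset.mem_univ _
  · intro c' _
    simp [Finset.mem_filter, consComp]
  · -- left inverse : cons (tail c) = c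
    intro c hc
    have hc' := (Finset.mem_filter.mp hc).2
    ext1
    simp only [consComp, tailComp]
    cases hb : c.blocks with
    | nil => exact absurd hb (hne c)
    | cons a t =>
      have ha : a ∈ c.blocks := by rw [hb]; exact List.mem_cons_self
      have hpos := c.blocks_pos ha
      rw [hb] at hc'
      simp only [List.headI] at hc'
      simp only [consComp, tailComp, hb, List.tail_cons]
      congr 1
      omega
  · -- right inverse
    intro c' _
    ext1
    simp [consComp, tailComp]
  · intro c hc
    congr 1
    have hc' := (Finset.mem_filter.mp hc).2
    ext1
    simp only [consComp, tailComp]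
    cases hb : c.blocks with
    | nil => exact absurd hb (hne c)
    | cons a t =>
      have ha : a ∈ c.blocks := by rw [hb]; exact List.mem_cons_self
      have hpos := c.blocks_pos ha
      rw [hb] at hc'
      simp only [List.headI] at hc'
      simp only [consComp, tailComp, hb, List.tail_cons]
      congr 1
      omega

lemma comp_sum : ∀ n l : ℕ,
    (∑ c : Composition n, if c.length = l then Pprod c else 0) = Acoef n l := by
  intro n
  induction n using Nat.strong_induction_on with
  | _ n ih =>
    intro l
    match n with
    | 0 =>
      have huniv : (Finset.univ : Finset (Composition 0)) = {Composition.ones 0} := by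
        ext c
        simp only [Finset.mem_univ, Finset.mem_singleton, true_iff]
        ext1
        rw [comp0_blocks c]
        simp [Composition.ones]
      rw [huniv, Finset.sum_singleton]
      have hlen : (Composition.ones 0).length = 0 := Composition.ones_length 0
      match l with
      | 0 =>
        rw [hlen]
        simp [Pprod, hlen, Acoef]
      | l + 1 =>
        rw [hlen, if_neg (by omega)]
        exact (Acoef_zero_left _ (Nat.succ_pos _)).symm
    | n + 1 =>
      have hmaps : ∀ c : Composition (n + 1), c ∈ Finset.univ →
          c.blocks.headI - 1 ∈ Finset.range (n + 1) := by
        intro c _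
        rw [Finset.mem_range]
        cases hb : c.blocks with
        | nil =>
          exfalso
          have := c.blocks_sum
          rw [hb] at this
          simp at this
        | cons a t =>
          have hs := c.blocks_sum
          rw [hb] at hs
          simp only [List.sum_cons] at hs
          simp only [List.headI]
          omega
      rw [← Finset.sum_fiberwise_of_maps_to hmaps]
      have inner : ∀ k ∈ Finset.range (n + 1),
          (∑ c ∈ Finset.univ.filter
              (fun c : Composition (n + 1) => c.blocks.headI - 1 = k),
            if c.length = l then Pprod c else 0)
          = ∑ c' : Composition (n - k),
              if c'.length + 1 = l then (1 / ((k + 1).factorial : ℚ)) * Pprod c' else 0 := by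
        intro k hk
        rw [Finset.mem_range] at hk
        rw [fiber_sum n k hk]
        refine Finset.sum_congr rfl fun c' _ => ?_
        rw [consComp_length, Pprod_cons]
      rw [Finset.sum_congr rfl inner]
      match l with
      | 0 =>
        rw [Acoef_zero_right _ (Nat.succ_pos _)]
        refine Finset.sum_eq_zero fun k _ => Finset.sum_eq_zero fun c' _ => ?_
        rw [if_neg (by omega)]
      | l + 1 =>
        rw [Acoef_succ]
        refine Finset.sum_congr rfl fun k hk => ?_
        rw [Finset.mem_range] at hk
        have : ∀ c' : Composition (n - k),
            (if c'.length + 1 = l + 1 then (1 / ((k + 1).factorial : ℚ)) * Pprod c' else 0)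
            = (1 / ((k + 1).factorial : ℚ)) * (if c'.length = l then Pprod c' else 0) := by
          intro c'
          rcases eq_or_ne c'.length l with h | h
          · rw [if_pos (by omega), if_pos h]
          · rw [if_neg (by omega), if_neg h, mul_zero]
        rw [Finset.sum_congr rfl fun c' _ => this c', ← Finset.mul_sum, ih (n - k) (by omega) l,
          one_div_mul_eq_div]


lemma comp_identity (n : ℕ) (hn : 1 ≤ n) :
    (∑ c : Composition n, (-1 : ℚ) ^ (c.length - 1) / (c.length : ℚ) * Pprod c)
      = if n = 1 then 1 else 0 := by
  rw [← Asum n hn]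
  have step1 : ∀ c : Composition n,
      (-1 : ℚ) ^ (c.length - 1) / (c.length : ℚ) * Pprod c
        = ∑ l ∈ Finset.range (n + 1),
            if c.length = l then (-1 : ℚ) ^ (l - 1) / (l : ℚ) * Pprod c else 0 := by
    intro c
    rw [Finset.sum_ite_eq (Finset.range (n + 1)) c.length
      (fun l => (-1 : ℚ) ^ (l - 1) / (l : ℚ) * Pprod c),
      if_pos (Finset.mem_range.mpr (Nat.lt_succ_of_le c.length_le))]
  rw [Finset.sum_congr rfl fun c _ => step1 c, Finset.sum_comm]
  refine Finset.sum_congr rfl fun l _ => ?_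
  rw [← comp_sum n l, Finset.mul_sum]
  refine Finset.sum_congr rfl fun c _ => ?_
  by_cases h : c.length = l
  · rw [if_pos h, if_pos h]
  · rw [if_neg h, if_neg h, mul_zero]

section WS

variable {Λ T : Type*} [AddCommMonoid Λ] [LinearOrder T]
  (C : Set Λ) (τ : Λ → T)

variable {C τ}

lemma tau_add_le_max (hτ : WeakStability C τ) {x y : Λ} (hx : x ∈ C) (hy : y ∈ C) :
    τ (x + y) ≤ max (τ x) (τ y) := by
  rcases hτ x hx y hy with ⟨h1, h2⟩ | ⟨h1, h2⟩
  · exact le_trans h2 (le_max_right _ _)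
  · exact le_trans h2 (le_max_left _ _)

lemma min_le_tau_add (hτ : WeakStability C τ) {x y : Λ} (hx : x ∈ C) (hy : y ∈ C) :
    min (τ x) (τ y) ≤ τ (x + y) := by
  rcases hτ x hx y hy with ⟨h1, h2⟩ | ⟨h1, h2⟩
  · exact le_trans (min_le_left _ _) h1
  · exact le_trans (min_le_right _ _) h1

lemma sum_mem_C (hCadd : ∀ a ∈ C, ∀ b ∈ C, a + b ∈ C)
    {s : Finset ℕ} {f : ℕ → Λ} (hs : s.Nonempty) (hf : ∀ j ∈ s, f j ∈ C) :
    (∑ j ∈ s, f j) ∈ C :=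
  Finset.sum_induction_nonempty f (· ∈ C) (fun a b ha hb => hCadd a ha b hb) hs hf

lemma tau_sum_le (hτ : WeakStability C τ) (hCadd : ∀ a ∈ C, ∀ b ∈ C, a + b ∈ C)
    {s : Finset ℕ} {f : ℕ → Λ} (hs : s.Nonempty) (hf : ∀ j ∈ s, f j ∈ C)
    {b : T} (hb : ∀ j ∈ s, τ (f j) ≤ b) : τ (∑ j ∈ s, f j) ≤ b := by
  have := Finset.sum_induction_nonempty f (fun x => x ∈ C ∧ τ x ≤ b)
    (fun a g ha hg => ⟨hCadd a ha.1 g hg.1,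
      le_trans (tau_add_le_max hτ ha.1 hg.1) (max_le ha.2 hg.2)⟩)
    hs (fun j hj => ⟨hf j hj, hb j hj⟩)
  exact this.2

lemma tau_sum_lt (hτ : WeakStability C τ) (hCadd : ∀ a ∈ C, ∀ b ∈ C, a + b ∈ C)
    {s : Finset ℕ} {f : ℕ → Λ} (hs : s.Nonempty) (hf : ∀ j ∈ s, f j ∈ C)
    {b : T} (hb : ∀ j ∈ s, τ (f j) < b) : τ (∑ j ∈ s, f j) < b := by
  have := Finset.sum_induction_nonempty f (fun x => x ∈ C ∧ τ x < b)
    (fun a g ha hg => ⟨hCadd a ha.1 g hg.1,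
      lt_of_le_of_lt (tau_add_le_max hτ ha.1 hg.1) (max_lt ha.2 hg.2)⟩)
    hs (fun j hj => ⟨hf j hj, hb j hj⟩)
  exact this.2

lemma le_tau_sum (hτ : WeakStability C τ) (hCadd : ∀ a ∈ C, ∀ b ∈ C, a + b ∈ C)
    {s : Finset ℕ} {f : ℕ → Λ} (hs : s.Nonempty) (hf : ∀ j ∈ s, f j ∈ C)
    {b : T} (hb : ∀ j ∈ s, b ≤ τ (f j)) : b ≤ τ (∑ j ∈ s, f j) := by
  have := Finset.sum_induction_nonempty f (fun x => x ∈ C ∧ b ≤ τ x)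
    (fun a g ha hg => ⟨hCadd a ha.1 g hg.1,
      le_trans (le_min ha.2 hg.2) (min_le_tau_add hτ ha.1 hg.1)⟩)
    hs (fun j hj => ⟨hf j hj, hb j hj⟩)
  exact this.2

lemma tau_sum_eq (hτ : WeakStability C τ) (hCadd : ∀ a ∈ C, ∀ b ∈ C, a + b ∈ C)
    {s : Finset ℕ} {f : ℕ → Λ} (hs : s.Nonempty) (hf : ∀ j ∈ s, f j ∈ C)
    {b : T} (hb : ∀ j ∈ s, τ (f j) = b) : τ (∑ j ∈ s, f j) = b :=
  le_antisymm (tau_sum_le hτ hCadd hs hf fun j hj => le_of_eq (hb j hj))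
    (le_tau_sum hτ hCadd hs hf fun j hj => ge_of_eq (hb j hj))

lemma Scoef_one {T' : Type*} [LinearOrder T'] (τ' : Λ → T') (β : ℕ → Λ) :
    Scoef τ τ' 1 β = 1 := by
  rw [Scoef, if_pos]
  · simp
  · simp

/-- Key vanishing: `S(β₁,…,βₘ;τ,τ) = 0` for `m ≥ 2`. -/
lemma Scoef_self_eq_zero (hτ : WeakStability C τ) (hCadd : ∀ a ∈ C, ∀ b ∈ C, a + b ∈ C)
    (m : ℕ) (hm : 2 ≤ m) (β : ℕ → Λ) (hβ : ∀ j < m, β j ∈ C) :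
    Scoef τ τ m β = 0 := by
  rw [Scoef, if_neg]
  intro hall
  -- the largest index achieving the maximum of τ ∘ β on range m
  set s := (Finset.range m).filter
    (fun j => ∀ j' ∈ Finset.range m, τ (β j') ≤ τ (β j)) with hs
  have hsne : s.Nonempty := by
    obtain ⟨j, hj, hjmax⟩ := Finset.exists_max_image (Finset.range m) (fun j => τ (β j))
      ⟨0, Finset.mem_range.mpr (by omega)⟩
    exact ⟨j, Finset.mem_filter.mpr ⟨hj, hjmax⟩⟩
  set k := s.max' hsne with hk
  have hkmem := s.max'_mem hsne
  rw [Finset.mem_filter, Finset.mem_range] at hkmem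
  obtain ⟨hkm, hmax⟩ := hkmem
  have hmax' : ∀ j < m, τ (β j) ≤ τ (β k) := fun j hj =>
    hmax j (Finset.mem_range.mpr hj)
  have hstrict : ∀ j, k < j → j < m → τ (β j) < τ (β k) := by
    intro j hkj hjm
    rcases lt_or_eq_of_le (hmax' j hjm) with h | h
    · exact h
    · exfalso
      have hjs : j ∈ s := Finset.mem_filter.mpr ⟨Finset.mem_range.mpr hjm,
        fun j' hj' => h ▸ hmax j' hj'⟩
      have := Finset.le_max' s j hjs
      omega
  -- memberships of partial sums
  have hmemIco : ∀ a b : ℕ, a < b → b ≤ m → (∑ j ∈ Finset.Ico a b, β j) ∈ C := by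
    intro a b hab hbm
    exact sum_mem_C hCadd (by rw [Finset.nonempty_Ico]; omega)
      (fun j hj => hβ j (by rw [Finset.mem_Ico] at hj; omega))
  have hmemR : ∀ a : ℕ, 0 < a → a ≤ m → (∑ j ∈ Finset.range a, β j) ∈ C := by
    intro a ha ham
    exact sum_mem_C hCadd (by rw [Finset.nonempty_range_iff]; omega)
      (fun j hj => hβ j (by rw [Finset.mem_range] at hj; omega))
  rcases Nat.eq_zero_or_pos k with hk0 | hkpos
  · -- k = 0 : use the cut i = 1
    have h1 := hall 1 (Finset.mem_Ico.mpr ⟨le_refl 1, by omega⟩)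
    have ht1 : τ (∑ j ∈ Finset.Ico 1 m, β j) < τ (β 0) := by
      rw [← hk0]
      exact tau_sum_lt hτ hCadd (by rw [Finset.nonempty_Ico]; omega)
        (fun j hj => hβ j (by rw [Finset.mem_Ico] at hj; omega))
        (fun j hj => by
          rw [Finset.mem_Ico] at hj
          exact hstrict j (by omega) hj.2)
    rw [Finset.sum_range_one] at h1
    have hstrict1 : τ (β 1) < τ (β 0) := by
      rw [← hk0]; exact hstrict 1 (by omega) (by omega)
    rcases h1 with ⟨ha1, ha2⟩ | ⟨hb1, hb2⟩
    · simp only [show (1 : ℕ) - 1 = 0 from rfl] at ha1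
      exact absurd ha1 (not_le.mpr hstrict1)
    · exact absurd hb2 (not_le.mpr ht1)
  rcases eq_or_lt_of_le (show k ≤ m - 1 by omega) with hktop | hkmid
  · -- k = m - 1 : use the cut i = m - 1
    have h1 := hall (m - 1) (Finset.mem_Ico.mpr ⟨by omega, by omega⟩)
    have htop : Finset.Ico (m - 1) m = {m - 1} := by
      rw [show m = (m - 1) + 1 by omega]
      simp [Nat.Ico_succ_singleton]
    rw [htop, Finset.sum_singleton] at h1
    have hh : τ (∑ j ∈ Finset.range (m - 1), β j) ≤ τ (β k) := by
      exact tau_sum_le hτ hCadd (by rw [Finset.nonempty_range_iff]; omega)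
        (fun j hj => hβ j (by rw [Finset.mem_range] at hj; omega))
        (fun j hj => hmax' j (by rw [Finset.mem_range] at hj; omega))
    rw [hktop] at hh
    rcases h1 with ⟨ha1, ha2⟩ | ⟨hb1, hb2⟩
    · exact absurd (lt_of_lt_of_le ha2 hh) (lt_irrefl _)
    · have hmm := hmax' (m - 1 - 1) (by omega)
      rw [hktop] at hmm
      exact absurd hb1 (not_lt.mpr hmm)
  · -- 0 < k < m - 1 : use the cuts k and k + 1
    have hck := hall k (Finset.mem_Ico.mpr ⟨by omega, by omega⟩)
    have hck1 := hall (k + 1) (Finset.mem_Ico.mpr ⟨by omega, by omega⟩)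
    -- cut k must be of type (a)
    have hcase_a : τ (∑ j ∈ Finset.Ico k m, β j) < τ (∑ j ∈ Finset.range k, β j) := by
      rcases hck with ⟨_, h⟩ | ⟨h, _⟩
      · exact h
      · exact absurd h (not_lt.mpr (hmax' (k - 1) (by omega)))
    -- cut k+1 must be of type (b)
    have hcase_b : τ (∑ j ∈ Finset.range (k + 1), β j) ≤ τ (∑ j ∈ Finset.Ico (k + 1) m, β j) := by
      rcases hck1 with ⟨h, _⟩ | ⟨_, h⟩
      · simp only [Nat.add_sub_cancel] at h
        exact absurd h (not_le.mpr (hstrict (k + 1) (by omega) (by omega)))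
      · exact h
    have hhk : τ (∑ j ∈ Finset.range k, β j) ≤ τ (β k) :=
      tau_sum_le hτ hCadd (by rw [Finset.nonempty_range_iff]; omega)
        (fun j hj => hβ j (by rw [Finset.mem_range] at hj; omega))
        (fun j hj => hmax' j (by rw [Finset.mem_range] at hj; omega))
    have htk1 : τ (∑ j ∈ Finset.Ico (k + 1) m, β j) ≤ τ (β k) :=
      tau_sum_le hτ hCadd (by rw [Finset.nonempty_Ico]; omega)
        (fun j hj => hβ j (by rw [Finset.mem_Ico] at hj; omega))
        (fun j hj => by
          rw [Finset.mem_Ico] at hj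
          exact le_of_lt (hstrict j (by omega) hj.2))
    -- τ hk ≤ τ hk1
    have hsplit : ∑ j ∈ Finset.range (k + 1), β j
        = (∑ j ∈ Finset.range k, β j) + β k := Finset.sum_range_succ _ _
    have h1 : τ (∑ j ∈ Finset.range k, β j) ≤ τ (∑ j ∈ Finset.range (k + 1), β j) := by
      rw [hsplit]
      have := min_le_tau_add hτ (hmemR k (by omega) (by omega)) (hβ k (by omega))
      rw [min_eq_left hhk] at this
      exact this
    -- τ tk1 ≤ τ tk
    have hsplit2 : ∑ j ∈ Finset.Ico k m, β j
        = β k + ∑ j ∈ Finset.Ico (k + 1) m, β j :=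
      Finset.sum_eq_sum_Ico_succ_bot (by omega) _
    have h2 : τ (∑ j ∈ Finset.Ico (k + 1) m, β j) ≤ τ (∑ j ∈ Finset.Ico k m, β j) := by
      rw [hsplit2]
      have := min_le_tau_add hτ (hβ k (by omega)) (hmemIco (k + 1) m (by omega) (by omega))
      rw [min_eq_right htk1] at this
      exact this
    have := lt_of_le_of_lt (h1.trans (hcase_b.trans h2)) hcase_a
    exact absurd this (lt_irrefl _)

end WS

/-- For a weak stability condition `(τ,T,≤)` on a positive cone
`C ⊆ Λ∖{0}`, and all `n ≥ 1` and `α₁,…,αₙ ∈ C`, the coefficient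
`U(α₁,…,αₙ; τ, τ)` equals `1` if `n = 1` and `0` if `n ≥ 2`. -/
theorem Ucoef_self {Λ T : Type*} [AddCommMonoid Λ] [LinearOrder T]
    (C : Set Λ) (hCadd : ∀ a ∈ C, ∀ b ∈ C, a + b ∈ C) (hC0 : (0 : Λ) ∉ C)
    (τ : Λ → T) (hτ : WeakStability C τ)
    (n : ℕ) (hn : 1 ≤ n) (α : ℕ → Λ) (hα : ∀ i < n, α i ∈ C) :
    Ucoef τ τ n α = if n = 1 then 1 else 0 := by
  classical
  -- `G` : all `τ (α j)` equal `τ` of the total sum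
  set G : Prop := ∀ j < n, τ (α j) = τ (∑ r ∈ Finset.range n, α r) with hGdef
  have blockSum_mem : ∀ c : Composition n, ∀ i < c.length, blockSum α c i ∈ C := by
    intro c i hi
    apply sum_mem_C hCadd
    · rw [Finset.nonempty_Ico]
      exact c.sizeUpTo_strict_mono hi
    · intro r hr
      rw [Finset.mem_Ico] at hr
      exact hα r (lt_of_lt_of_le hr.2 (c.sizeUpTo_le _))
  have blockSum_tau : ∀ c : Composition n, G → ∀ i < c.length,
      τ (blockSum α c i) = τ (∑ r ∈ Finset.range n, α r) := by
    intro c hg i hi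
    apply tau_sum_eq hτ hCadd
    · rw [Finset.nonempty_Ico]
      exact c.sizeUpTo_strict_mono hi
    · intro r hr
      rw [Finset.mem_Ico] at hr
      exact hα r (lt_of_lt_of_le hr.2 (c.sizeUpTo_le _))
    · intro r hr
      rw [Finset.mem_Ico] at hr
      exact hg r (lt_of_lt_of_le hr.2 (c.sizeUpTo_le _))
  have blockSum_ones : ∀ (L : ℕ) (β : ℕ → Λ) (i : ℕ), i < L →
      blockSum β (Composition.ones L) i = β i := by
    intro L β i hi
    unfold blockSum
    rw [Composition.ones_sizeUpTo, Composition.ones_sizeUpTo,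
      min_eq_left (by omega), min_eq_left (by omega), Nat.Ico_succ_singleton,
      Finset.sum_singleton]
  have hinner : ∀ c : Composition n,
      (∑ d : Composition c.length,
        if (∀ i < c.length, ∀ j, c.sizeUpTo i ≤ j → j < c.sizeUpTo (i + 1) →
              τ (blockSum α c i) = τ (α j)) ∧
            (∀ i < d.length,
              τ (blockSum (blockSum α c) d i) = τ (∑ r ∈ Finset.range n, α r))
        then ((-1 : ℚ) ^ (d.length - 1) / (d.length : ℚ))
          * (∏ i ∈ Finset.range d.length,
              ((Scoef τ τ (d.sizeUpTo (i + 1) - d.sizeUpTo i)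
                (fun t => blockSum α c (d.sizeUpTo i + t))) : ℚ))
          * (∏ i ∈ Finset.range c.length,
              (1 : ℚ) / ((c.sizeUpTo (i + 1) - c.sizeUpTo i).factorial : ℚ))
        else 0)
      = if G then ((-1 : ℚ) ^ (c.length - 1) / (c.length : ℚ)) * Pprod c else 0 := by
    intro c
    have hlen : 0 < c.length := c.length_pos_of_pos (by omega)
    rw [Finset.sum_eq_single (Composition.ones c.length)]
    · -- value at `ones`
      set L := c.length with hL
      have hP : ∏ i ∈ Finset.range (Composition.ones L).length,
          ((Scoef τ τ ((Composition.ones L).sizeUpTo (i + 1) - (Composition.ones L).sizeUpTo i)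
            (fun t => blockSum α c ((Composition.ones L).sizeUpTo i + t))) : ℚ) = 1 := by
        refine Finset.prod_eq_one fun i hi => ?_
        rw [Finset.mem_range, Composition.ones_length] at hi
        have hdiff : (Composition.ones L).sizeUpTo (i + 1) - (Composition.ones L).sizeUpTo i = 1 := by
          rw [Composition.ones_sizeUpTo, Composition.ones_sizeUpTo]
          omega
        rw [hdiff, Scoef_one]
        norm_num
      have hcond : ((∀ i < c.length, ∀ j, c.sizeUpTo i ≤ j → j < c.sizeUpTo (i + 1) →
              τ (blockSum α c i) = τ (α j)) ∧
            (∀ i < (Composition.ones L).length,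
              τ (blockSum (blockSum α c) (Composition.ones L) i)
                = τ (∑ r ∈ Finset.range n, α r))) ↔ G := by
        constructor
        · rintro ⟨h1, h2⟩ j hj
          have hj' : j < c.sizeUpTo c.length := by rw [c.sizeUpTo_length]; exact hj
          set i := c.index ⟨j, hj⟩ with hi
          have hle := c.sizeUpTo_index_le ⟨j, hj⟩
          have hlt := c.lt_sizeUpTo_index_succ ⟨j, hj⟩
          have e1 : τ (blockSum α c i) = τ (α j) := h1 i i.2 j hle hlt
          have e2 : τ (blockSum (blockSum α c) (Composition.ones L) i)
              = τ (∑ r ∈ Finset.range n, α r) := by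
            apply h2
            rw [Composition.ones_length]
            exact i.2
          rw [blockSum_ones L (blockSum α c) i i.2] at e2
          rw [← e1, e2]
        · intro hg
          constructor
          · intro i hi j h1 h2
            rw [blockSum_tau c hg i hi, hg j (lt_of_lt_of_le h2 (c.sizeUpTo_le _))]
          · intro i hi
            rw [Composition.ones_length] at hi
            rw [blockSum_ones L (blockSum α c) i hi]
            exact blockSum_tau c hg i hi
      by_cases hg : G
      · rw [if_pos (hcond.mpr hg), if_pos hg, hP, mul_one, Composition.ones_length]
        rfl
      · rw [if_neg (fun h => hg (hcond.mp h)), if_neg hg]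
    · -- all other `d` give `0`
      intro d _ hd
      have hblock : ∃ i : ℕ, i < d.length ∧ 2 ≤ d.sizeUpTo (i + 1) - d.sizeUpTo i := by
        by_contra h
        push_neg at h
        apply hd
        rw [Composition.eq_ones_iff]
        intro b hb
        obtain ⟨i, hget⟩ := List.mem_iff_get.mp hb
        have hi : (i : ℕ) < d.length := i.2
        have hsz := d.sizeUpTo_succ hi
        have hpos : 0 < b := d.blocks_pos hb
        have h1 := h (i : ℕ) hi
        rw [List.get_eq_getElem] at hget
        rw [hsz, hget] at h1
        omega
      obtain ⟨i, hi, h2⟩ := hblock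
      have hSzero : Scoef τ τ (d.sizeUpTo (i + 1) - d.sizeUpTo i)
          (fun t => blockSum α c (d.sizeUpTo i + t)) = 0 := by
        apply Scoef_self_eq_zero hτ hCadd _ h2
        intro t ht
        apply blockSum_mem c
        have hle : d.sizeUpTo (i + 1) ≤ c.length := d.sizeUpTo_le _
        omega
      have hprod : (∏ i' ∈ Finset.range d.length,
          ((Scoef τ τ (d.sizeUpTo (i' + 1) - d.sizeUpTo i')
            (fun t => blockSum α c (d.sizeUpTo i' + t))) : ℚ)) = 0 := by
        apply Finset.prod_eq_zero (Finset.mem_range.mpr hi)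
        rw [hSzero]
        norm_num
      split
      · rw [hprod]
        ring
      · rfl
    · intro h
      exact absurd (Finset.mem_univ _) h
  unfold Ucoef
  rw [Finset.sum_congr rfl (fun c _ => hinner c)]
  by_cases hg : G
  · simp only [if_pos hg]
    exact comp_identity n hn
  · simp only [if_neg hg, Finset.sum_const_zero]
    rw [if_neg]
    rintro rfl
    apply hg
    intro j hj
    have hj0 : j = 0 := by omega
    subst hj0
    rw [Finset.sum_range_one]
end

section
/- Let Λ be an abelian group, C ⊆ Λ∖{0} a positive cone, and (τ,T,≤), (τ̃,T̃,≤) weak stability conditions on C such that (τ̃,T̃,≤) dominates (τ,T,≤). Then for all n ≥ 1 and α_1,…,α_n ∈ C: unless τ̃(α_1) = τ̃(α_2) = ⋯ = τ̃(α_n), both U(α_1,…,α_n;τ,τ̃) = 0 and U(α_1,…,α_n;τ̃,τ) = 0. -/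
section Helpers
variable {Λ T : Type*} [AddCommMonoid Λ] [LinearOrder T]
variable {C : Set Λ} {μ : Λ → T}

lemma sum_Ico_memC (hCadd : ∀ a ∈ C, ∀ b ∈ C, a + b ∈ C) {β : ℕ → Λ} {a b : ℕ}
    (hab : a < b) (h : ∀ j, a ≤ j → j < b → β j ∈ C) :
    (∑ j ∈ Finset.Ico a b, β j) ∈ C := by
  induction b, hab using Nat.le_induction with
  | base => simpa using h a le_rfl (by omega)
  | succ b hab ih =>
    rw [Finset.sum_Ico_succ_top (by omega)]
    exact hCadd _ (ih fun j h1 h2 => h j h1 (by omega)) _ (h b (by omega) (by omega))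

lemma ws_between (hμ : WeakStability C μ) {a g : Λ} (ha : a ∈ C) (hg : g ∈ C) :
    (min (μ a) (μ g) ≤ μ (a + g)) ∧ (μ (a + g) ≤ max (μ a) (μ g)) := by
  rcases hμ a ha g hg with ⟨h1, h2⟩ | ⟨h1, h2⟩
  · exact ⟨le_trans (min_le_left _ _) h1, le_trans h2 (le_max_right _ _)⟩
  · exact ⟨le_trans (min_le_right _ _) h1, le_trans h2 (le_max_left _ _)⟩

lemma sum_Ico_le (hCadd : ∀ a ∈ C, ∀ b ∈ C, a + b ∈ C) (hμ : WeakStability C μ)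
    {β : ℕ → Λ} {a b : ℕ} {s : T} (hab : a < b) (h : ∀ j, a ≤ j → j < b → β j ∈ C)
    (hle : ∀ j, a ≤ j → j < b → μ (β j) ≤ s) :
    μ (∑ j ∈ Finset.Ico a b, β j) ≤ s := by
  induction b, hab using Nat.le_induction with
  | base => simpa using hle a le_rfl (by omega)
  | succ b hab ih =>
    rw [Finset.sum_Ico_succ_top (by omega)]
    have hS := sum_Ico_memC hCadd hab (fun j h1 h2 => h j h1 (by omega))
    have := (ws_between hμ hS (h b (by omega) (by omega))).2
    refine le_trans this (max_le ?_ ?_)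
    · exact ih (fun j h1 h2 => h j h1 (by omega)) (fun j h1 h2 => hle j h1 (by omega))
    · exact hle b (by omega) (by omega)

lemma le_sum_Ico (hCadd : ∀ a ∈ C, ∀ b ∈ C, a + b ∈ C) (hμ : WeakStability C μ)
    {β : ℕ → Λ} {a b : ℕ} {s : T} (hab : a < b) (h : ∀ j, a ≤ j → j < b → β j ∈ C)
    (hle : ∀ j, a ≤ j → j < b → s ≤ μ (β j)) :
    s ≤ μ (∑ j ∈ Finset.Ico a b, β j) := by
  induction b, hab using Nat.le_induction with
  | base => simpa using hle a le_rfl (by omega)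
  | succ b hab ih =>
    rw [Finset.sum_Ico_succ_top (by omega)]
    have hS := sum_Ico_memC hCadd hab (fun j h1 h2 => h j h1 (by omega))
    have := (ws_between hμ hS (h b (by omega) (by omega))).1
    refine le_trans (le_min ?_ ?_) this
    · exact ih (fun j h1 h2 => h j h1 (by omega)) (fun j h1 h2 => hle j h1 (by omega))
    · exact hle b (by omega) (by omega)

lemma sum_Ico_const (hCadd : ∀ a ∈ C, ∀ b ∈ C, a + b ∈ C) (hμ : WeakStability C μ)
    {β : ℕ → Λ} {a b : ℕ} {s : T} (hab : a < b) (h : ∀ j, a ≤ j → j < b → β j ∈ C)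
    (hle : ∀ j, a ≤ j → j < b → μ (β j) = s) :
    μ (∑ j ∈ Finset.Ico a b, β j) = s :=
  le_antisymm (sum_Ico_le hCadd hμ hab h fun j h1 h2 => (hle j h1 h2).le)
    (le_sum_Ico hCadd hμ hab h fun j h1 h2 => (hle j h1 h2).ge)

lemma range_memC (hCadd : ∀ a ∈ C, ∀ b ∈ C, a + b ∈ C) {β : ℕ → Λ} {b : ℕ}
    (hb : 0 < b) (h : ∀ j, j < b → β j ∈ C) :
    (∑ j ∈ Finset.range b, β j) ∈ C := by
  rw [Finset.range_eq_Ico]; exact sum_Ico_memC hCadd hb (fun j _ h2 => h j h2)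

lemma lemP (hCadd : ∀ a ∈ C, ∀ b ∈ C, a + b ∈ C) (hμ : WeakStability C μ)
    {n : ℕ} {β : ℕ → Λ} (hβ : ∀ j, j < n → β j ∈ C)
    (H : ∀ i, 1 ≤ i → i < n →
      (μ (β (i-1)) ≤ μ (β i) ∧ μ (∑ j ∈ Finset.Ico i n, β j) < μ (∑ j ∈ Finset.range i, β j)) ∨
      (μ (β i) ≤ μ (β (i-1)) ∧ μ (∑ j ∈ Finset.range i, β j) ≤ μ (∑ j ∈ Finset.Ico i n, β j))) :
    ∀ j, j < n → μ (β j) = μ (β 0) := by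
  set L : ℕ → Λ := fun i => ∑ j ∈ Finset.range i, β j with hLdef
  set R : ℕ → Λ := fun i => ∑ j ∈ Finset.Ico i n, β j with hRdef
  have memL : ∀ i, 1 ≤ i → i ≤ n → L i ∈ C := by
    intro i h1 h2
    simp only [hLdef, Finset.range_eq_Ico]
    exact sum_Ico_memC hCadd h1 (fun j _ hj => hβ j (by omega))
  have memR : ∀ i, i < n → R i ∈ C := by
    intro i h2
    exact sum_Ico_memC hCadd h2 (fun j _ hj => hβ j hj)
  have Lsucc : ∀ i, L (i + 1) = L i + β i := fun i => Finset.sum_range_succ β i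
  have Rsucc : ∀ i, i < n → R i = β i + R (i + 1) := by
    intro i h
    exact Finset.sum_eq_sum_Ico_succ_bot h β
  have Ltop : L 1 = β 0 := by simp [hLdef]
  have Rtop : 1 ≤ n → R (n - 1) = β (n - 1) := by
    intro hn
    simp [hRdef, Nat.Ico_pred_singleton hn]
  have noD : ∀ i, 1 ≤ i → i < n → μ (L i) ≤ μ (R i) := by
    intro i
    induction i using Nat.strong_induction_on with
    | _ i IH =>
      intro h1 h2
      by_contra hD
      push_neg at hD
      have hA : μ (β (i - 1)) ≤ μ (β i) := by
        rcases H i h1 h2 with ⟨h, _⟩ | ⟨_, h⟩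
        · exact h
        · exact absurd h (not_le.2 hD)
      rcases le_or_gt (μ (β i)) (μ (R i)) with hcase | hcase
      · rcases eq_or_lt_of_le h1 with he | h1'
        · have hx := lt_of_le_of_lt (hA.trans hcase) hD
          rw [← he] at hx
          rw [Ltop] at hx
          simp at hx
        · have hmem_b : β (i - 1) ∈ C := hβ _ (by omega)
          have hLsp : L i = L (i - 1) + β (i - 1) := by
            have := Lsucc (i - 1)
            rwa [show i - 1 + 1 = i by omega] at this
          have hRsp : R (i - 1) = β (i - 1) + R i := by
            have h' := Rsucc (i - 1) (by omega)
            rwa [show i - 1 + 1 = i by omega] at h'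
          have hβlt : μ (β (i - 1)) < μ (L i) := lt_of_le_of_lt (hA.trans hcase) hD
          have hLle : μ (L i) ≤ μ (L (i - 1)) := by
            have hb := (ws_between hμ (memL (i - 1) (by omega) (by omega)) hmem_b).2
            rw [← hLsp] at hb
            rcases le_max_iff.1 hb with h | h
            · exact h
            · exact absurd hβlt (not_lt.2 h)
          have hRlt : μ (R (i - 1)) < μ (L (i - 1)) := by
            have hb := (ws_between hμ hmem_b (memR i h2)).2
            rw [← hRsp] at hb
            calc μ (R (i - 1)) ≤ max (μ (β (i - 1))) (μ (R i)) := hb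
              _ < μ (L i) := max_lt hβlt hD
              _ ≤ μ (L (i - 1)) := hLle
          exact absurd (IH (i - 1) (by omega) (by omega) (by omega)) (not_le.2 hRlt)
      · have chain : ∀ m k, 1 ≤ k → k < n → n - k = m →
            μ (R k) < μ (L k) → μ (R k) < μ (β k) → False := by
          intro m
          induction m with
          | zero => intro k _ h2' h3' _ _; omega
          | succ m IHm =>
            intro k hk1 hk2 hk3 hkD hklt
            by_cases hk : k = n - 1
            · rw [hk, Rtop (by omega)] at hklt
              exact lt_irrefl _ hklt
            · have hk2' : k + 1 < n := by omega
              have hbk : β k ∈ C := hβ k (by omega)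
              have hRk : R k = β k + R (k + 1) := Rsucc k (by omega)
              have hR1 : μ (R (k + 1)) ≤ μ (R k) := by
                have hb := (ws_between hμ hbk (memR (k + 1) hk2')).1
                rw [← hRk] at hb
                by_contra hcon
                push_neg at hcon
                exact absurd hb (not_le.2 (lt_min hklt hcon))
              have hL1 : μ (R (k + 1)) < μ (L (k + 1)) := by
                have hb := (ws_between hμ (memL k (by omega) (by omega)) hbk).1
                rw [← Lsucc k] at hb
                exact lt_of_lt_of_le
                  (lt_min (lt_of_le_of_lt hR1 hkD) (lt_of_le_of_lt hR1 hklt)) hb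
              have hA1 : μ (β k) ≤ μ (β (k + 1)) := by
                rcases H (k + 1) (by omega) hk2' with ⟨h, _⟩ | ⟨_, h⟩
                · rwa [show k + 1 - 1 = k by omega] at h
                · exact absurd h (not_le.2 hL1)
              exact IHm (k + 1) (by omega) hk2' (by omega) hL1
                (lt_of_le_of_lt hR1 (lt_of_lt_of_le hklt hA1))
        exact chain (n - i) i h1 h2 rfl hD hcase
  have dec : ∀ i, 1 ≤ i → i < n → μ (β i) ≤ μ (β (i - 1)) := by
    intro i h1 h2
    rcases H i h1 h2 with ⟨_, h⟩ | ⟨h, _⟩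
    · exact absurd h (not_lt.2 (noD i h1 h2))
    · exact h
  have anti : ∀ b, b < n → ∀ a, a ≤ b → μ (β b) ≤ μ (β a) := by
    intro b
    induction b with
    | zero => intro _ a ha; rw [Nat.le_zero.1 ha]
    | succ b IHb =>
      intro hb a ha
      rcases Nat.eq_or_lt_of_le ha with he | hlt
      · rw [← he]
      · have h1 : μ (β (b + 1)) ≤ μ (β b) := by
          have := dec (b + 1) (by omega) hb
          rwa [show b + 1 - 1 = b by omega] at this
        exact h1.trans (IHb (by omega) a (by omega))
  have adj : ∀ i, 1 ≤ i → i < n → μ (β (i - 1)) = μ (β i) := by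
    intro i h1 h2
    have hL : μ (β (i - 1)) ≤ μ (L i) := by
      simp only [hLdef, Finset.range_eq_Ico]
      exact le_sum_Ico hCadd hμ h1 (fun j _ hj => hβ j (by omega))
        (fun j _ hj => anti (i - 1) (by omega) j (by omega))
    have hR : μ (R i) ≤ μ (β i) :=
      sum_Ico_le hCadd hμ h2 (fun j _ hj2 => hβ j hj2)
        (fun j hj1 hj2 => anti j hj2 i hj1)
    exact le_antisymm (hL.trans ((noD i h1 h2).trans hR)) (dec i h1 h2)
  intro j hj
  induction j with
  | zero => rfl
  | succ j IHj =>
    have hthis := adj (j + 1) (by omega) hj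
    rw [show j + 1 - 1 = j by omega] at hthis
    rw [← hthis]
    exact IHj (by omega)


lemma lemQ {T' : Type*} [LinearOrder T'] {τ : Λ → T} {σ : Λ → T'}
    (hCadd : ∀ a ∈ C, ∀ b ∈ C, a + b ∈ C)
    (hτ : WeakStability C τ) (hσ : WeakStability C σ)
    (hdom : ∀ a ∈ C, ∀ b ∈ C, τ a ≤ τ b → σ a ≤ σ b)
    {n : ℕ} {β : ℕ → Λ} (hβ : ∀ j, j < n → β j ∈ C)
    (H : ∀ i, 1 ≤ i → i < n →
      (σ (β (i - 1)) ≤ σ (β i) ∧ τ (∑ j ∈ Finset.Ico i n, β j) < τ (∑ j ∈ Finset.range i, β j)) ∨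
      (σ (β i) < σ (β (i - 1)) ∧ τ (∑ j ∈ Finset.range i, β j) ≤ τ (∑ j ∈ Finset.Ico i n, β j))) :
    ∀ j, j < n → σ (β j) = σ (β 0) := by
  set L : ℕ → Λ := fun i => ∑ j ∈ Finset.range i, β j with hLdef
  set R : ℕ → Λ := fun i => ∑ j ∈ Finset.Ico i n, β j with hRdef
  have memL : ∀ i, 1 ≤ i → i ≤ n → L i ∈ C := by
    intro i h1 h2
    simp only [hLdef, Finset.range_eq_Ico]
    exact sum_Ico_memC hCadd h1 (fun j _ hj => hβ j (by omega))
  have memR : ∀ i, i < n → R i ∈ C := by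
    intro i h2
    exact sum_Ico_memC hCadd h2 (fun j _ hj => hβ j hj)
  have Lsucc : ∀ i, L (i + 1) = L i + β i := fun i => Finset.sum_range_succ β i
  have Rsucc : ∀ i, i < n → R i = β i + R (i + 1) := by
    intro i h
    exact Finset.sum_eq_sum_Ico_succ_bot h β
  have Ltop : L 1 = β 0 := by simp [hLdef]
  have Rtop : 1 ≤ n → R (n - 1) = β (n - 1) := by
    intro hn
    simp [hRdef, Nat.Ico_pred_singleton hn]
  -- leftward chain lemma
  have chainL : ∀ k, 1 ≤ k → k < n → τ (L k) ≤ τ (R k) → τ (L k) < τ (β (k - 1)) → False := by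
    intro k
    induction k using Nat.strong_induction_on with
    | _ k IHk =>
      intro hk1 hk2 hkbad hklt
      rcases eq_or_lt_of_le hk1 with he | hk1'
      · rw [← he] at hklt
        rw [Ltop] at hklt
        simp at hklt
      · have hbm : β (k - 1) ∈ C := hβ _ (by omega)
        have hLsp : L k = L (k - 1) + β (k - 1) := by
          have := Lsucc (k - 1)
          rwa [show k - 1 + 1 = k by omega] at this
        have hRsp : R (k - 1) = β (k - 1) + R k := by
          have h' := Rsucc (k - 1) (by omega)
          rwa [show k - 1 + 1 = k by omega] at h'
        have hLk : τ (L (k - 1)) ≤ τ (L k) := by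
          have hb := (ws_between hτ (memL (k - 1) (by omega) (by omega)) hbm).1
          rw [← hLsp] at hb
          rcases min_le_iff.1 hb with h | h
          · exact h
          · exact absurd hklt (not_lt.2 h)
        have hRk1 : τ (L k) ≤ τ (R (k - 1)) := by
          have hb := (ws_between hτ hbm (memR k hk2)).1
          rw [← hRsp] at hb
          exact le_trans (le_min hklt.le hkbad) hb
        have hbadk : τ (L (k - 1)) ≤ τ (R (k - 1)) := le_trans hLk hRk1
        have hb2 : σ (β (k - 1)) < σ (β (k - 1 - 1)) := by
          rcases H (k - 1) (by omega) (by omega) with ⟨_, h⟩ | ⟨h, _⟩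
          · exact absurd h (not_lt.2 hbadk)
          · exact h
        have hτ2 : τ (β (k - 1)) < τ (β (k - 1 - 1)) := by
          by_contra hc
          push_neg at hc
          exact absurd (hdom _ (hβ _ (by omega)) _ (hβ _ (by omega)) hc) (not_le.2 hb2)
        exact IHk (k - 1) (by omega) (by omega) (by omega) hbadk
          (lt_of_le_of_lt hLk (lt_trans hklt hτ2))
  -- no bad cut
  have allD : ∀ m i, 1 ≤ i → i < n → n - i = m → τ (R i) < τ (L i) := by
    intro m
    induction m using Nat.strong_induction_on with
    | _ m IHm =>
      intro i h1 h2 h3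
      by_contra hbad
      push_neg at hbad
      have hb : σ (β i) < σ (β (i - 1)) := by
        rcases H i h1 h2 with ⟨_, h⟩ | ⟨h, _⟩
        · exact absurd h (not_lt.2 hbad)
        · exact h
      have hτdrop : τ (β i) < τ (β (i - 1)) := by
        by_contra hc
        push_neg at hc
        exact absurd (hdom _ (hβ _ (by omega)) _ (hβ _ h2) hc) (not_le.2 hb)
      rcases le_or_gt (τ (β (i - 1))) (τ (L i)) with hcase | hcase
      · by_cases hk : i = n - 1
        · have hR : τ (R i) = τ (β i) := by rw [hk, Rtop (by omega)]
          have : τ (β i) < τ (β i) :=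
            lt_of_lt_of_le hτdrop (le_trans (hcase.trans hbad) hR.le)
          exact lt_irrefl _ this
        · have h2' : i + 1 < n := by omega
          have hbk : β i ∈ C := hβ i h2
          have hτβR : τ (β i) < τ (R i) := lt_of_lt_of_le hτdrop (hcase.trans hbad)
          have hR1 : τ (R i) ≤ τ (R (i + 1)) := by
            have hbw := (ws_between hτ hbk (memR (i + 1) h2')).2
            rw [← Rsucc i h2] at hbw
            rcases le_max_iff.1 hbw with h | h
            · exact absurd hτβR (not_lt.2 h)
            · exact h
          have hL1 : τ (L (i + 1)) ≤ τ (R (i + 1)) := by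
            have hbw := (ws_between hτ (memL i (by omega) (by omega)) hbk).2
            rw [← Lsucc i] at hbw
            exact le_trans (le_trans hbw (max_le hbad hτβR.le)) hR1
          exact absurd (IHm (n - (i + 1)) (by omega) (i + 1) (by omega) h2' rfl)
            (not_lt.2 hL1)
      · exact chainL i h1 h2 hbad hcase
  have inc : ∀ i, 1 ≤ i → i < n → σ (β (i - 1)) ≤ σ (β i) := by
    intro i h1 h2
    rcases H i h1 h2 with ⟨h, _⟩ | ⟨_, h⟩
    · exact h
    · exact absurd h (not_le.2 (allD (n - i) i h1 h2 rfl))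
  have mono : ∀ b, b < n → ∀ a, a ≤ b → σ (β a) ≤ σ (β b) := by
    intro b
    induction b with
    | zero => intro _ a ha; rw [Nat.le_zero.1 ha]
    | succ b IHb =>
      intro hb a ha
      rcases Nat.eq_or_lt_of_le ha with he | hlt
      · rw [← he]
      · have h1 : σ (β b) ≤ σ (β (b + 1)) := by
          have := inc (b + 1) (by omega) hb
          rwa [show b + 1 - 1 = b by omega] at this
        exact (IHb (by omega) a (by omega)).trans h1
  have adj : ∀ i, 1 ≤ i → i < n → σ (β (i - 1)) = σ (β i) := by
    intro i h1 h2
    have hL : σ (L i) ≤ σ (β (i - 1)) := by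
      simp only [hLdef, Finset.range_eq_Ico]
      exact sum_Ico_le hCadd hσ h1 (fun j _ hj => hβ j (by omega))
        (fun j _ hj => mono (i - 1) (by omega) j (by omega))
    have hR : σ (β i) ≤ σ (R i) :=
      le_sum_Ico hCadd hσ h2 (fun j _ hj2 => hβ j hj2)
        (fun j hj1 hj2 => mono j hj2 i hj1)
    have hRL : σ (R i) ≤ σ (L i) :=
      hdom _ (memR i h2) _ (memL i h1 (by omega)) (allD (n - i) i h1 h2 rfl).le
    exact le_antisymm (inc i h1 h2) (hR.trans (hRL.trans hL))
  intro j hj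
  induction j with
  | zero => rfl
  | succ j IHj =>
    have hthis := adj (j + 1) (by omega) hj
    rw [show j + 1 - 1 = j by omega] at hthis
    rw [← hthis]
    exact IHj (by omega)

end Helpers


section Wrappers
variable {Λ T T' : Type*} [AddCommMonoid Λ] [LinearOrder T] [LinearOrder T']

lemma Scoef_cond {τ : Λ → T} {τ' : Λ → T'} {n : ℕ} {α : ℕ → Λ}
    (h : Scoef τ τ' n α ≠ 0) :
    ∀ i, 1 ≤ i → i < n →
      (τ (α (i - 1)) ≤ τ (α i) ∧
        τ' (∑ j ∈ Finset.Ico i n, α j) < τ' (∑ j ∈ Finset.range i, α j)) ∨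
      (τ (α i) < τ (α (i - 1)) ∧
        τ' (∑ j ∈ Finset.range i, α j) ≤ τ' (∑ j ∈ Finset.Ico i n, α j)) := by
  intro i h1 h2
  by_contra hc
  apply h
  unfold Scoef
  exact if_neg fun hall => hc (hall i (Finset.mem_Ico.mpr ⟨h1, h2⟩))

end Wrappers

section Assembly
variable {Λ T T' : Type*} [AddCommMonoid Λ] [LinearOrder T] [LinearOrder T']
variable {C : Set Λ} {τ : Λ → T} {σ : Λ → T'}

lemma Ucoef_ts_eq_zero (hCadd : ∀ a ∈ C, ∀ b ∈ C, a + b ∈ C)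
    (hσ : WeakStability C σ)
    (hdom : ∀ a ∈ C, ∀ b ∈ C, τ a ≤ τ b → σ a ≤ σ b)
    {n : ℕ} (hn : 1 ≤ n) {α : ℕ → Λ} (hα : ∀ i < n, α i ∈ C)
    (hne : ¬ ∀ i < n, σ (α i) = σ (α 0)) :
    Ucoef τ σ n α = 0 := by
  classical
  unfold Ucoef
  refine Finset.sum_eq_zero fun c _ => Finset.sum_eq_zero fun d _ => ?_
  by_cases hcond : (∀ i < c.length, ∀ j, c.sizeUpTo i ≤ j → j < c.sizeUpTo (i + 1) →
        τ (blockSum α c i) = τ (α j)) ∧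
      (∀ i < d.length,
        σ (blockSum (blockSum α c) d i) = σ (∑ r ∈ Finset.range n, α r))
  swap
  · rw [if_neg hcond]
  rw [if_pos hcond]
  obtain ⟨cond1, cond2⟩ := hcond
  set β := blockSum α c with hβdef
  have hβC : ∀ i, i < c.length → β i ∈ C := by
    intro i hi
    rw [hβdef]
    unfold blockSum
    exact sum_Ico_memC hCadd (c.sizeUpTo_strict_mono hi)
      (fun j _ hj => hα j (lt_of_lt_of_le hj (c.sizeUpTo_le _)))
  suffices hz : ∃ i ∈ Finset.range d.length,
      ((Scoef τ σ (d.sizeUpTo (i + 1) - d.sizeUpTo i)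
        (fun t => β (d.sizeUpTo i + t)) : ℚ)) = 0 by
    obtain ⟨i, hi, h0⟩ := hz
    rw [Finset.prod_eq_zero hi h0, mul_zero, zero_mul]
  by_contra hno
  push_neg at hno
  have key : ∀ r, r < c.length → σ (β r) = σ (∑ r ∈ Finset.range n, α r) := by
    intro r hr
    obtain ⟨i, hi, hle, hlt⟩ :
        ∃ i, i < d.length ∧ d.sizeUpTo i ≤ r ∧ r < d.sizeUpTo (i + 1) := by
      refine ⟨d.index ⟨r, hr⟩, (d.index ⟨r, hr⟩).2, d.sizeUpTo_index_le ⟨r, hr⟩, ?_⟩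
      simpa [Fin.val_succ] using d.lt_sizeUpTo_index_succ ⟨r, hr⟩
    have hab : d.sizeUpTo i < d.sizeUpTo (i + 1) := d.sizeUpTo_strict_mono hi
    have hbm : d.sizeUpTo (i + 1) ≤ c.length := d.sizeUpTo_le _
    have hS : Scoef τ σ (d.sizeUpTo (i + 1) - d.sizeUpTo i)
        (fun t => β (d.sizeUpTo i + t)) ≠ 0 := by
      intro h0
      exact hno i (Finset.mem_range.2 hi) (by rw [h0]; norm_num)
    have hcnd := Scoef_cond hS
    have hshC : ∀ t, t < d.sizeUpTo (i + 1) - d.sizeUpTo i →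
        β (d.sizeUpTo i + t) ∈ C := fun t ht => hβC _ (by omega)
    have hH : ∀ i', 1 ≤ i' → i' < d.sizeUpTo (i + 1) - d.sizeUpTo i →
        (σ (β (d.sizeUpTo i + (i' - 1))) ≤ σ (β (d.sizeUpTo i + i')) ∧
          σ (∑ j ∈ Finset.Ico i' (d.sizeUpTo (i + 1) - d.sizeUpTo i),
              β (d.sizeUpTo i + j)) <
            σ (∑ j ∈ Finset.range i', β (d.sizeUpTo i + j))) ∨
        (σ (β (d.sizeUpTo i + i')) ≤ σ (β (d.sizeUpTo i + (i' - 1))) ∧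
          σ (∑ j ∈ Finset.range i', β (d.sizeUpTo i + j)) ≤
            σ (∑ j ∈ Finset.Ico i' (d.sizeUpTo (i + 1) - d.sizeUpTo i),
              β (d.sizeUpTo i + j))) := by
      intro i' h1 h2
      rcases hcnd i' h1 h2 with ⟨ha1, ha2⟩ | ⟨hb1, hb2⟩
      · exact Or.inl ⟨hdom _ (hshC _ (by omega)) _ (hshC _ (by omega)) ha1, ha2⟩
      · exact Or.inr ⟨hdom _ (hshC _ (by omega)) _ (hshC _ (by omega)) hb1.le, hb2⟩
    have hconst := lemP hCadd hσ hshC hH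
    have hsum : σ (∑ t ∈ Finset.range (d.sizeUpTo (i + 1) - d.sizeUpTo i),
        β (d.sizeUpTo i + t)) = σ (β (d.sizeUpTo i + 0)) := by
      rw [Finset.range_eq_Ico]
      exact sum_Ico_const hCadd hσ (by omega) (fun t _ ht => hshC t ht)
        (fun t _ ht => hconst t ht)
    have hblock : (∑ t ∈ Finset.range (d.sizeUpTo (i + 1) - d.sizeUpTo i),
        β (d.sizeUpTo i + t)) = blockSum β d i := by
      unfold blockSum
      rw [Finset.sum_Ico_eq_sum_range]
    have h2' := cond2 i hi
    have hr' : σ (β r) = σ (β (d.sizeUpTo i + 0)) := by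
      have := hconst (r - d.sizeUpTo i) (by omega)
      rwa [show d.sizeUpTo i + (r - d.sizeUpTo i) = r by omega] at this
    rw [hr', ← hsum, hblock, h2']
  apply hne
  have hαkey : ∀ j, j < n → σ (α j) = σ (∑ r ∈ Finset.range n, α r) := by
    intro j hj
    obtain ⟨i, hi, hle, hlt⟩ :
        ∃ i, i < c.length ∧ c.sizeUpTo i ≤ j ∧ j < c.sizeUpTo (i + 1) := by
      refine ⟨c.index ⟨j, hj⟩, (c.index ⟨j, hj⟩).2, c.sizeUpTo_index_le ⟨j, hj⟩, ?_⟩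
      simpa [Fin.val_succ] using c.lt_sizeUpTo_index_succ ⟨j, hj⟩
    have hτ1 := cond1 i hi j hle hlt
    have hστ : σ (β i) = σ (α j) :=
      le_antisymm (hdom _ (hβC i hi) _ (hα j hj) hτ1.le)
        (hdom _ (hα j hj) _ (hβC i hi) hτ1.ge)
    rw [← hστ, key i hi]
  intro i hi
  rw [hαkey i hi, hαkey 0 (by omega)]

lemma Ucoef_st_eq_zero (hCadd : ∀ a ∈ C, ∀ b ∈ C, a + b ∈ C)
    (hτ : WeakStability C τ) (hσ : WeakStability C σ)
    (hdom : ∀ a ∈ C, ∀ b ∈ C, τ a ≤ τ b → σ a ≤ σ b)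
    {n : ℕ} (hn : 1 ≤ n) {α : ℕ → Λ} (hα : ∀ i < n, α i ∈ C)
    (hne : ¬ ∀ i < n, σ (α i) = σ (α 0)) :
    Ucoef σ τ n α = 0 := by
  classical
  unfold Ucoef
  refine Finset.sum_eq_zero fun c _ => Finset.sum_eq_zero fun d _ => ?_
  by_cases hcond : (∀ i < c.length, ∀ j, c.sizeUpTo i ≤ j → j < c.sizeUpTo (i + 1) →
        σ (blockSum α c i) = σ (α j)) ∧
      (∀ i < d.length,
        τ (blockSum (blockSum α c) d i) = τ (∑ r ∈ Finset.range n, α r))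
  swap
  · rw [if_neg hcond]
  rw [if_pos hcond]
  obtain ⟨cond1, cond2⟩ := hcond
  set β := blockSum α c with hβdef
  have hβC : ∀ i, i < c.length → β i ∈ C := by
    intro i hi
    rw [hβdef]
    unfold blockSum
    exact sum_Ico_memC hCadd (c.sizeUpTo_strict_mono hi)
      (fun j _ hj => hα j (lt_of_lt_of_le hj (c.sizeUpTo_le _)))
  have hdl : 0 < d.length :=
    d.length_pos_of_pos (c.length_pos_of_pos (by omega))
  have hγC : ∀ i, i < d.length → blockSum β d i ∈ C := by
    intro i hi
    unfold blockSum
    exact sum_Ico_memC hCadd (d.sizeUpTo_strict_mono hi)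
      (fun j _ hj => hβC j (lt_of_lt_of_le hj (d.sizeUpTo_le _)))
  suffices hz : ∃ i ∈ Finset.range d.length,
      ((Scoef σ τ (d.sizeUpTo (i + 1) - d.sizeUpTo i)
        (fun t => β (d.sizeUpTo i + t)) : ℚ)) = 0 by
    obtain ⟨i, hi, h0⟩ := hz
    rw [Finset.prod_eq_zero hi h0, mul_zero, zero_mul]
  by_contra hno
  push_neg at hno
  have key : ∀ r, r < c.length → σ (β r) = σ (blockSum β d 0) := by
    intro r hr
    obtain ⟨i, hi, hle, hlt⟩ :
        ∃ i, i < d.length ∧ d.sizeUpTo i ≤ r ∧ r < d.sizeUpTo (i + 1) := by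
      refine ⟨d.index ⟨r, hr⟩, (d.index ⟨r, hr⟩).2, d.sizeUpTo_index_le ⟨r, hr⟩, ?_⟩
      simpa [Fin.val_succ] using d.lt_sizeUpTo_index_succ ⟨r, hr⟩
    have hab : d.sizeUpTo i < d.sizeUpTo (i + 1) := d.sizeUpTo_strict_mono hi
    have hbm : d.sizeUpTo (i + 1) ≤ c.length := d.sizeUpTo_le _
    have hS : Scoef σ τ (d.sizeUpTo (i + 1) - d.sizeUpTo i)
        (fun t => β (d.sizeUpTo i + t)) ≠ 0 := by
      intro h0
      exact hno i (Finset.mem_range.2 hi) (by rw [h0]; norm_num)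
    have hcnd := Scoef_cond hS
    have hshC : ∀ t, t < d.sizeUpTo (i + 1) - d.sizeUpTo i →
        β (d.sizeUpTo i + t) ∈ C := fun t ht => hβC _ (by omega)
    have hconst := lemQ hCadd hτ hσ hdom hshC hcnd
    have hsum : σ (∑ t ∈ Finset.range (d.sizeUpTo (i + 1) - d.sizeUpTo i),
        β (d.sizeUpTo i + t)) = σ (β (d.sizeUpTo i + 0)) := by
      rw [Finset.range_eq_Ico]
      exact sum_Ico_const hCadd hσ (by omega) (fun t _ ht => hshC t ht)
        (fun t _ ht => hconst t ht)
    have hblock : (∑ t ∈ Finset.range (d.sizeUpTo (i + 1) - d.sizeUpTo i),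
        β (d.sizeUpTo i + t)) = blockSum β d i := by
      unfold blockSum
      rw [Finset.sum_Ico_eq_sum_range]
    have hγ : σ (blockSum β d i) = σ (blockSum β d 0) := by
      have ht : τ (blockSum β d i) = τ (blockSum β d 0) := by
        rw [cond2 i hi, cond2 0 hdl]
      exact le_antisymm (hdom _ (hγC i hi) _ (hγC 0 hdl) ht.le)
        (hdom _ (hγC 0 hdl) _ (hγC i hi) ht.ge)
    have hr' : σ (β r) = σ (β (d.sizeUpTo i + 0)) := by
      have := hconst (r - d.sizeUpTo i) (by omega)
      rwa [show d.sizeUpTo i + (r - d.sizeUpTo i) = r by omega] at this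
    rw [hr', ← hsum, hblock, hγ]
  apply hne
  have hαkey : ∀ j, j < n → σ (α j) = σ (blockSum β d 0) := by
    intro j hj
    obtain ⟨i, hi, hle, hlt⟩ :
        ∃ i, i < c.length ∧ c.sizeUpTo i ≤ j ∧ j < c.sizeUpTo (i + 1) := by
      refine ⟨c.index ⟨j, hj⟩, (c.index ⟨j, hj⟩).2, c.sizeUpTo_index_le ⟨j, hj⟩, ?_⟩
      simpa [Fin.val_succ] using c.lt_sizeUpTo_index_succ ⟨j, hj⟩
    have hσ1 := cond1 i hi j hle hlt
    rw [← hσ1, key i hi]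
  intro i hi
  rw [hαkey i hi, hαkey 0 (by omega)]

end Assembly

/-- Let `(τ,T,≤)` and `(τ̃,T̃,≤)` be weak stability conditions on
a positive cone `C ⊆ Λ∖{0}` such that `(τ̃,T̃,≤)` dominates `(τ,T,≤)`.  Then for
all `n ≥ 1` and `α₁,…,αₙ ∈ C`: unless `τ̃(α₁) = ⋯ = τ̃(αₙ)`, both
`U(α₁,…,αₙ; τ, τ̃) = 0` and `U(α₁,…,αₙ; τ̃, τ) = 0`. -/
theorem Ucoef_dominates {Λ T T' : Type*} [AddCommMonoid Λ]
    [LinearOrder T] [LinearOrder T']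
    (C : Set Λ) (hCadd : ∀ a ∈ C, ∀ b ∈ C, a + b ∈ C) (hC0 : (0 : Λ) ∉ C)
    (τ : Λ → T) (σ : Λ → T')
    (hτ : WeakStability C τ) (hσ : WeakStability C σ)
    (hdom : ∀ a ∈ C, ∀ b ∈ C, τ a ≤ τ b → σ a ≤ σ b)
    (n : ℕ) (hn : 1 ≤ n) (α : ℕ → Λ) (hα : ∀ i < n, α i ∈ C)
    (hne : ¬ ∀ i < n, σ (α i) = σ (α 0)) :
    Ucoef τ σ n α = 0 ∧ Ucoef σ τ n α = 0 := by
  exact ⟨Ucoef_ts_eq_zero hCadd hσ hdom hn hα hne,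
    Ucoef_st_eq_zero hCadd hτ hσ hdom hn hα hne⟩
end

section
/- Let Q be a quiver with no oriented cycles, μ an increasing slope function on the representations of Q defined by constants (μ_v)_{v∈Q_0}, and d ∈ ℕ^{Q_0}∖{0} such that d ≠ δ_v for every v ∈ Q_0 and there exists t ∈ ℝ with d(v) = 0 for all v ∈ Q_0 with μ_v ≠ t. Then every representation of Q with dimension vector d is μ-semistable, no representation with dimension vector d is μ-stable, and χ_Q(d,d) ≥ 2, so that 2 − 2χ_Q(d,d) < 0. -/
/-- A quiver: a finite directed graph with vertex set `V`, edge set `E`, and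
head and tail maps `h, t : E → V`. -/
structure QuiverData where
  V : Type
  E : Type
  [fV : Fintype V]
  [fE : Fintype E]
  [dV : DecidableEq V]
  [dE : DecidableEq E]
  h : E → V
  t : E → V

attribute [instance] QuiverData.fV QuiverData.fE QuiverData.dV QuiverData.dE

/-- `Q` has no oriented cycles: there is no nonempty cyclic sequence of edges
`e₀,…,eₙ` with `h(eᵢ) = t(e_{i+1})` cyclically. -/
def QuiverData.NoOrientedCycles (Q : QuiverData) : Prop :=
  ∀ (n : ℕ) (e : Fin (n + 1) → Q.E), ¬ (∀ i : Fin (n + 1), Q.h (e i) = Q.t (e (i + 1)))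

/-- A finite-dimensional complex representation of the quiver `Q`. -/
structure QRep (Q : QuiverData) where
  carrier : Q.V → Type
  [acg : ∀ v, AddCommGroup (carrier v)]
  [mod : ∀ v, Module ℂ (carrier v)]
  [fd : ∀ v, FiniteDimensional ℂ (carrier v)]
  edge : ∀ e : Q.E, carrier (Q.t e) →ₗ[ℂ] carrier (Q.h e)

attribute [instance] QRep.acg QRep.mod QRep.fd

/-- The dimension vector of a representation. -/
noncomputable def QRep.dimVec {Q : QuiverData} (X : QRep Q) : Q.V → ℕ :=
  fun v => Module.finrank ℂ (X.carrier v)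

/-- A subrepresentation of `X`: a family of subspaces preserved by all edge maps. -/
structure SubRep {Q : QuiverData} (X : QRep Q) where
  mem : ∀ v, Submodule ℂ (X.carrier v)
  stable : ∀ e : Q.E, (mem (Q.t e)).map (X.edge e) ≤ mem (Q.h e)

/-- The dimension vector of a subrepresentation. -/
noncomputable def SubRep.dimVec {Q : QuiverData} {X : QRep Q} (W : SubRep X) : Q.V → ℕ :=
  fun v => Module.finrank ℂ (W.mem v)

/-- The slope of a dimension vector `d` with respect to constants `μc`. -/
noncomputable def slopeFn {Q : QuiverData} (μc : Q.V → ℝ) (d : Q.V → ℕ) : ℝ :=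
  (∑ v, μc v * (d v : ℝ)) / (∑ v, (d v : ℝ))

/-- `X` is `μ`-semistable: `μ(dim E') ≤ μ(dim E − dim E')` for all subrepresentations
`E' ⊆ E` with `E' ≠ 0, E`. -/
def IsSemistable {Q : QuiverData} (μc : Q.V → ℝ) (X : QRep Q) : Prop :=
  ∀ W : SubRep X, (¬ ∀ v, W.mem v = ⊥) → (¬ ∀ v, W.mem v = ⊤) →
    slopeFn μc W.dimVec ≤ slopeFn μc (fun v => X.dimVec v - W.dimVec v)

/-- `X` is `μ`-stable: `μ(dim E') < μ(dim E − dim E')` for all subrepresentations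
`E' ⊆ E` with `E' ≠ 0, E`. -/
def IsStable {Q : QuiverData} (μc : Q.V → ℝ) (X : QRep Q) : Prop :=
  ∀ W : SubRep X, (¬ ∀ v, W.mem v = ⊥) → (¬ ∀ v, W.mem v = ⊤) →
    slopeFn μc W.dimVec < slopeFn μc (fun v => X.dimVec v - W.dimVec v)

/-- The slope function given by constants `μc` is increasing:
`μ_{t(a)} < μ_{h(a)}` for every edge `a`. -/
def IsIncreasing {Q : QuiverData} (μc : Q.V → ℝ) : Prop :=
  ∀ a : Q.E, μc (Q.t a) < μc (Q.h a)

/-- Two representations are isomorphic: there is a family of linear equivalences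
commuting with the edge maps. -/
def RepIso {Q : QuiverData} (X Y : QRep Q) : Prop :=
  ∃ φ : ∀ v, X.carrier v ≃ₗ[ℂ] Y.carrier v,
    ∀ (e : Q.E) (x : X.carrier (Q.t e)), φ (Q.h e) (X.edge e x) = Y.edge e (φ (Q.t e) x)

/-- The dimension vector `δ_v`. -/
def deltaVec (Q : QuiverData) (v : Q.V) : Q.V → ℕ :=
  fun w => if w = v then 1 else 0

/-- The Euler form of the quiver `Q`. -/
def eulerForm (Q : QuiverData) (d e : Q.V → ℤ) : ℤ :=
  ∑ v, d v * e v - ∑ a : Q.E, d (Q.t a) * e (Q.h a)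

section Aux

/-- In trivial cases (source or target trivial), any family of subspaces is edge-stable. -/
theorem subRep_stable_of_trivial_edges {Q : QuiverData} (X : QRep Q)
    (hedge : ∀ e : Q.E, Module.finrank ℂ (X.carrier (Q.t e)) = 0 ∨
      Module.finrank ℂ (X.carrier (Q.h e)) = 0)
    (mem : ∀ v, Submodule ℂ (X.carrier v)) :
    ∀ e : Q.E, (mem (Q.t e)).map (X.edge e) ≤ mem (Q.h e) := by
  intro e
  rcases hedge e with h | h
  · have hs : Subsingleton (X.carrier (Q.t e)) := Module.finrank_zero_iff.mp h
    rintro y ⟨x, -, rfl⟩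
    rw [Subsingleton.elim x 0, map_zero]
    exact (mem _).zero_mem
  · have hs : Subsingleton (X.carrier (Q.h e)) := Module.finrank_zero_iff.mp h
    have : mem (Q.h e) = ⊤ :=
      Submodule.eq_top_iff'.mpr fun x => by
        rw [Subsingleton.elim x 0]; exact (mem _).zero_mem
    rw [this]; exact le_top

/-- If `f` is supported where `μc = t` and `f ≠ 0`, the slope is `t`. -/
theorem slopeFn_eq_of_const {Q : QuiverData} (μc : Q.V → ℝ) (t : ℝ) (f : Q.V → ℕ)
    (h : ∀ v, f v ≠ 0 → μc v = t) (hne : ∃ v, f v ≠ 0) : slopeFn μc f = t := by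
  obtain ⟨v, hv⟩ := hne
  have hpos : 0 < ∑ w, (f w : ℝ) :=
    Finset.sum_pos' (fun w _ => by positivity)
      ⟨v, Finset.mem_univ v, by exact_mod_cast Nat.pos_of_ne_zero hv⟩
  have hnum : ∑ w, μc w * (f w : ℝ) = t * ∑ w, (f w : ℝ) := by
    rw [Finset.mul_sum]
    refine Finset.sum_congr rfl fun w _ => ?_
    by_cases hw : f w = 0
    · simp [hw]
    · rw [h w hw]
  rw [slopeFn, hnum, mul_div_assoc, div_self hpos.ne', mul_one]

end Aux

/-- Let `Q` have no oriented cycles and `μ` be an increasing slope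
function given by constants `μc`.  Let `d ≠ 0` with `d ≠ δ_v` for every `v`, and
suppose there is `t ∈ ℝ` with `d(v) = 0` whenever `μc v ≠ t`.  Then every
representation of dimension vector `d` is `μ`-semistable, none is `μ`-stable, and
`χ_Q(d,d) ≥ 2`, so that `2 − 2χ_Q(d,d) < 0`. -/
theorem semistable_not_stable_of_single_slope_value (Q : QuiverData)
    (hQ : Q.NoOrientedCycles) (μc : Q.V → ℝ) (hμ : IsIncreasing μc)
    (d : Q.V → ℕ) (hd0 : d ≠ 0) (hdelta : ∀ v : Q.V, d ≠ deltaVec Q v)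
    (ht : ∃ t : ℝ, ∀ v : Q.V, μc v ≠ t → d v = 0) :
    (∀ X : QRep Q, X.dimVec = d → IsSemistable μc X) ∧
    (∀ X : QRep Q, X.dimVec = d → ¬ IsStable μc X) ∧
    2 ≤ eulerForm Q (fun v => (d v : ℤ)) (fun v => (d v : ℤ)) ∧
    2 - 2 * eulerForm Q (fun v => (d v : ℤ)) (fun v => (d v : ℤ)) < 0 := by
  classical
  obtain ⟨t, htv⟩ := ht
  -- no edge connects two vertices in the support of d
  have hedge : ∀ e : Q.E, d (Q.t e) = 0 ∨ d (Q.h e) = 0 := by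
    intro e
    by_contra h
    push_neg at h
    have h1 : μc (Q.t e) = t := by by_contra hc; exact h.1 (htv _ hc)
    have h2 : μc (Q.h e) = t := by by_contra hc; exact h.2 (htv _ hc)
    have := hμ e
    rw [h1, h2] at this
    exact lt_irrefl _ this
  have hvex : ∃ v, d v ≠ 0 := by
    by_contra hall; push_neg at hall
    exact hd0 (funext hall)
  -- total dimension is at least 2
  have hsum2 : 2 ≤ ∑ v, d v := by
    by_contra hlt
    push_neg at hlt
    obtain ⟨v, hv⟩ := hvex
    have hsplit : ∑ w, d w = d v + ∑ w ∈ Finset.univ.erase v, d w :=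
      (Finset.add_sum_erase _ _ (Finset.mem_univ v)).symm
    have hdv : d v = 1 ∧ ∑ w ∈ Finset.univ.erase v, d w = 0 := by
      constructor <;> omega
    refine hdelta v (funext fun w => ?_)
    by_cases hw : w = v
    · simp [hw, deltaVec, hdv.1]
    · have := Finset.sum_eq_zero_iff.mp hdv.2 w
        (Finset.mem_erase.mpr ⟨hw, Finset.mem_univ w⟩)
      simp [deltaVec, hw, this]
  have hedge' : ∀ X : QRep Q, X.dimVec = d → ∀ e : Q.E,
      Module.finrank ℂ (X.carrier (Q.t e)) = 0 ∨
        Module.finrank ℂ (X.carrier (Q.h e)) = 0 := by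
    intro X hX e
    rcases hedge e with h | h
    · exact Or.inl (by rw [show Module.finrank ℂ (X.carrier (Q.t e)) = X.dimVec (Q.t e)
        from rfl, hX, h])
    · exact Or.inr (by rw [show Module.finrank ℂ (X.carrier (Q.h e)) = X.dimVec (Q.h e)
        from rfl, hX, h])
  -- key slope computation
  have key : ∀ X : QRep Q, X.dimVec = d → ∀ W : SubRep X, (¬ ∀ v, W.mem v = ⊥) →
      (¬ ∀ v, W.mem v = ⊤) →
      slopeFn μc W.dimVec = t ∧ slopeFn μc (fun v => X.dimVec v - W.dimVec v) = t := by
    intro X hX W hb htp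
    push_neg at hb htp
    obtain ⟨u, hu⟩ := hb
    obtain ⟨w, hw⟩ := htp
    have hXd : ∀ v, X.dimVec v = d v := fun v => congrFun hX v
    have hle : ∀ v, W.dimVec v ≤ d v := fun v => (hXd v) ▸ (Submodule.finrank_le _)
    constructor
    · refine slopeFn_eq_of_const μc t _ (fun v hv => ?_) ⟨u, ?_⟩
      · by_contra hc
        exact hv (Nat.le_zero.mp ((htv v hc) ▸ hle v))
      · exact fun h => hu (Submodule.finrank_eq_zero.mp h)
    · refine slopeFn_eq_of_const μc t _ (fun v hv => ?_) ⟨w, ?_⟩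
      · have hv' : X.dimVec v - W.dimVec v ≠ 0 := hv
        by_contra hc
        have h0 := htv v hc
        rw [hXd v, h0] at hv'
        omega
      · show X.dimVec w - W.dimVec w ≠ 0
        have hlt : W.dimVec w < X.dimVec w :=
          Submodule.finrank_lt hw
        omega
  -- Euler form computation
  have heuler : eulerForm Q (fun v => (d v : ℤ)) (fun v => (d v : ℤ)) =
      ∑ v, (d v : ℤ) * (d v : ℤ) := by
    rw [eulerForm]
    have : ∑ a : Q.E, ((d (Q.t a) : ℤ)) * (d (Q.h a) : ℤ) = 0 :=
      Finset.sum_eq_zero fun a _ => by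
        rcases hedge a with h | h <;> simp [h]
    rw [this, sub_zero]
  have heuler2 : 2 ≤ eulerForm Q (fun v => (d v : ℤ)) (fun v => (d v : ℤ)) := by
    rw [heuler]
    have h1 : (2 : ℤ) ≤ ∑ v, (d v : ℤ) := by exact_mod_cast Nat.cast_le.mpr hsum2
    have h2 : ∑ v, (d v : ℤ) ≤ ∑ v, (d v : ℤ) * (d v : ℤ) :=
      Finset.sum_le_sum fun v _ => by
        rcases Nat.eq_zero_or_pos (d v) with h | h
        · simp [h]
        · exact le_mul_of_one_le_left (by positivity) (by exact_mod_cast h)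
    linarith
  refine ⟨?_, ?_, heuler2, by linarith⟩
  · -- semistability
    intro X hX W hb htp
    obtain ⟨h1, h2⟩ := key X hX W hb htp
    rw [h1, h2]
  · -- no stable representation
    intro X hX hstab
    obtain ⟨v, hv⟩ := hvex
    have hnontriv : ∀ u, d u ≠ 0 → Nontrivial (X.carrier u) := fun u hu =>
      Module.finrank_pos_iff.mp (by
        rw [show Module.finrank ℂ (X.carrier u) = X.dimVec u from rfl, hX]
        exact Nat.pos_of_ne_zero hu)
    by_cases hwex : ∃ w, w ≠ v ∧ d w ≠ 0
    · obtain ⟨w, hwv, hw0⟩ := hwex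
      set mem : ∀ u, Submodule ℂ (X.carrier u) :=
        fun u => if u = v then ⊤ else ⊥ with hmem
      let W : SubRep X := ⟨mem, subRep_stable_of_trivial_edges X (hedge' X hX) mem⟩
      have hWb : ¬ ∀ u, W.mem u = ⊥ := by
        intro h
        have hh := h v
        simp only [W, hmem, if_pos rfl] at hh
        haveI := hnontriv v hv
        exact top_ne_bot hh
      have hWt : ¬ ∀ u, W.mem u = ⊤ := by
        intro h
        have hh := h w
        simp only [W, hmem, if_neg hwv] at hh
        haveI := hnontriv w hw0
        exact bot_ne_top hh
      obtain ⟨h1, h2⟩ := key X hX W hWb hWt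
      have := hstab W hWb hWt
      rw [h1, h2] at this
      exact lt_irrefl t this
    · push_neg at hwex
      have hdv2 : 2 ≤ d v := by
        have hsplit : ∑ w, d w = d v + ∑ w ∈ Finset.univ.erase v, d w :=
          (Finset.add_sum_erase _ _ (Finset.mem_univ v)).symm
        have hz : ∑ w ∈ Finset.univ.erase v, d w = 0 :=
          Finset.sum_eq_zero fun w hwm => hwex w (Finset.mem_erase.mp hwm).1
        omega
      haveI := hnontriv v hv
      obtain ⟨x, hx⟩ := exists_ne (0 : X.carrier v)
      set p : Submodule ℂ (X.carrier v) := Submodule.span ℂ {x} with hp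
      set mem : ∀ u, Submodule ℂ (X.carrier u) :=
        fun u => if h : u = v then h.symm ▸ p else ⊥ with hmem
      let W : SubRep X := ⟨mem, subRep_stable_of_trivial_edges X (hedge' X hX) mem⟩
      have hmemv : W.mem v = p := by
        show (if h : v = v then h.symm ▸ p else ⊥) = p
        rw [dif_pos rfl]
      have hWb : ¬ ∀ u, W.mem u = ⊥ := by
        intro h
        have hh := h v
        rw [hmemv] at hh
        exact hx (by simpa using Submodule.span_eq_bot.mp hh x rfl)
      have hWt : ¬ ∀ u, W.mem u = ⊤ := by
        intro h
        have hh := h v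
        rw [hmemv] at hh
        have hfr : Module.finrank ℂ p = 1 := finrank_span_singleton hx
        rw [hh] at hfr
        rw [finrank_top] at hfr
        have : X.dimVec v = d v := congrFun hX v
        rw [QRep.dimVec] at this
        omega
      obtain ⟨h1, h2⟩ := key X hX W hWb hWt
      have := hstab W hWb hWt
      rw [h1, h2] at this
      exact lt_irrefl t this
end

section
/- Let Q be a quiver with no oriented cycles, μ an increasing slope function on the representations of Q defined by constants (μ_v)_{v∈Q_0}, and d ∈ ℕ^{Q_0}∖{0} such that there exist v_1, v_2 ∈ Q_0 with d(v_1) > 0, d(v_2) > 0 and μ_{v_1} ≠ μ_{v_2} (equivalently, d is neither of the form δ_v nor supported on vertices with a single common value of μ_v). Then no representation of Q with dimension vector d is μ-semistable (and hence none is μ-stable). -/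
/-- Let `Q` have no oriented cycles and `μ` be an increasing slope
function given by constants `μc`.  Let `d ≠ 0` be such that there exist vertices
`v₁, v₂` with `d v₁ > 0`, `d v₂ > 0` and `μc v₁ ≠ μc v₂`.  Then no representation
of dimension vector `d` is `μ`-semistable (hence none is `μ`-stable). -/
theorem no_semistable_of_two_slope_values (Q : QuiverData)
    (hQ : Q.NoOrientedCycles) (μc : Q.V → ℝ) (hμ : IsIncreasing μc)
    (d : Q.V → ℕ) (hd0 : d ≠ 0)
    (hvv : ∃ v₁ v₂ : Q.V, 0 < d v₁ ∧ 0 < d v₂ ∧ μc v₁ ≠ μc v₂) :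
    ∀ X : QRep Q, X.dimVec = d → ¬ IsSemistable μc X ∧ ¬ IsStable μc X := by
  intro X hX
  classical
  -- WLOG obtain a < b
  obtain ⟨v₁, v₂, h1, h2, hne⟩ := hvv
  obtain ⟨a, b, ha, hb, hab⟩ : ∃ a b : Q.V, 0 < d a ∧ 0 < d b ∧ μc a < μc b := by
    rcases lt_or_gt_of_ne hne with h | h
    · exact ⟨v₁, v₂, h1, h2, h⟩
    · exact ⟨v₂, v₁, h2, h1, h⟩
  set c : ℝ := μc b with hc
  -- the subrepresentation
  set W : SubRep X := {
    mem := fun v => if c ≤ μc v then ⊤ else ⊥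
    stable := by
      intro e
      by_cases ht : c ≤ μc (Q.t e)
      · have hh : c ≤ μc (Q.h e) := le_of_lt (lt_of_le_of_lt ht (hμ e))
        simp [hh]
      · simp [ht] } with hW
  have hmem : ∀ v, W.mem v = if c ≤ μc v then ⊤ else ⊥ := fun v => rfl
  have hWdim' : ∀ v, W.dimVec v = if c ≤ μc v then d v else 0 := by
    intro v
    by_cases h : c ≤ μc v
    · have htop : W.mem v = ⊤ := by rw [hmem v]; exact if_pos h
      have h2 : W.dimVec v = Module.finrank ℂ (X.carrier v) := by
        unfold SubRep.dimVec; rw [htop]; exact finrank_top ℂ _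
      rw [h2, if_pos h, ← hX]; rfl
    · have hbot : W.mem v = ⊥ := by rw [hmem v]; exact if_neg h
      have h2 : W.dimVec v = 0 := by
        unfold SubRep.dimVec; rw [hbot]; exact finrank_bot ℂ _
      rw [h2, if_neg h]
  have hWdim : ∀ v, (W.dimVec v : ℝ) = if c ≤ μc v then (d v : ℝ) else 0 := by
    intro v; rw [hWdim' v]; split <;> simp
  have hQdim : ∀ v, ((X.dimVec v - W.dimVec v : ℕ) : ℝ)
      = if c ≤ μc v then 0 else (d v : ℝ) := by
    intro v
    rw [hWdim' v, hX]
    by_cases h : c ≤ μc v <;> simp [h]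
  -- W is nonzero and proper
  have hW0 : ¬ ∀ v, W.mem v = ⊥ := by
    intro h
    have := h b
    rw [hmem b, if_pos (le_refl c)] at this
    have : (⊤ : Submodule ℂ (X.carrier b)) = ⊥ := this
    have hrk : Module.finrank ℂ (X.carrier b) = 0 := by
      rw [← finrank_top ℂ (X.carrier b), this, finrank_bot]
    have : d b = 0 := by rw [← hX]; exact hrk
    omega
  have hWT : ¬ ∀ v, W.mem v = ⊤ := by
    intro h
    have := h a
    have hna : ¬ c ≤ μc a := not_le.mpr hab
    rw [hmem a, if_neg hna] at this
    have hrk : Module.finrank ℂ (X.carrier a) = 0 := by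
      rw [← finrank_top ℂ (X.carrier a), ← this, finrank_bot]
    have : d a = 0 := by rw [← hX]; exact hrk
    omega
  -- slope comparisons
  have hD1 : 0 < ∑ v, (W.dimVec v : ℝ) := by
    apply Finset.sum_pos'
    · intro i _; positivity
    · refine ⟨b, Finset.mem_univ b, ?_⟩
      rw [hWdim b, if_pos (le_refl c)]
      exact_mod_cast hb
  have hD2 : 0 < ∑ v, ((X.dimVec v - W.dimVec v : ℕ) : ℝ) := by
    apply Finset.sum_pos'
    · intro i _; positivity
    · refine ⟨a, Finset.mem_univ a, ?_⟩
      rw [hQdim a, if_neg (not_le.mpr hab)]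
      exact_mod_cast ha
  have hN1 : c * ∑ v, (W.dimVec v : ℝ) ≤ ∑ v, μc v * (W.dimVec v : ℝ) := by
    rw [Finset.mul_sum]
    apply Finset.sum_le_sum
    intro i _
    rw [hWdim i]
    by_cases h : c ≤ μc i
    · rw [if_pos h]; exact mul_le_mul_of_nonneg_right h (by positivity)
    · rw [if_neg h]; simp
  have hN2 : ∑ v, μc v * ((X.dimVec v - W.dimVec v : ℕ) : ℝ)
      < c * ∑ v, ((X.dimVec v - W.dimVec v : ℕ) : ℝ) := by
    rw [Finset.mul_sum]
    apply Finset.sum_lt_sum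
    · intro i _
      rw [hQdim i]
      by_cases h : c ≤ μc i
      · rw [if_pos h]; simp
      · rw [if_neg h]
        exact mul_le_mul_of_nonneg_right (le_of_lt (not_le.mp h)) (by positivity)
    · refine ⟨a, Finset.mem_univ a, ?_⟩
      rw [hQdim a, if_neg (not_le.mpr hab)]
      have : (0:ℝ) < (d a : ℝ) := by exact_mod_cast ha
      exact mul_lt_mul_of_pos_right hab this
  have hslopeW : c ≤ slopeFn μc W.dimVec := by
    unfold slopeFn
    rw [le_div_iff₀ hD1]
    exact hN1
  have hslopeQ : slopeFn μc (fun v => X.dimVec v - W.dimVec v) < c := by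
    unfold slopeFn
    rw [div_lt_iff₀ hD2]
    exact hN2
  have key : ¬ slopeFn μc W.dimVec ≤ slopeFn μc (fun v => X.dimVec v - W.dimVec v) := by
    push_neg
    exact lt_of_lt_of_le hslopeQ hslopeW
  constructor
  · intro hss
    exact key (hss W hW0 hWT)
  · intro hst
    exact key (le_of_lt (hst W hW0 hWT))
end

section
/- Let Q, Q', Q'' be quivers, λ : Q → Q' and μ : Q' → Q'' morphisms of quivers, and (V,ρ) a finite-dimensional ℂ-representation of Q. Then the representations Σ_{μ∘λ}(V,ρ) and Σ_μ(Σ_λ(V,ρ)) of Q'' are isomorphic; in particular the induced maps on dimension vectors satisfy (μ∘λ)_* = μ_* ∘ λ_* : ℕ^{Q_0} → ℕ^{Q_0''}. -/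
/-- A morphism of quivers `λ : Q → Q'`: a map `f0` on vertices together with a
relation `f1 ⊆ Q₁ × Q₁'` on edges, satisfying conditions (i)–(iii) of
Definition 5.6 of the paper. -/
structure QMor (Q Q' : QuiverData) where
  f0 : Q.V → Q'.V
  f1 : Set (Q.E × Q'.E)
  compat : ∀ p ∈ f1, f0 (Q.h p.1) = Q'.h p.2 ∧ f0 (Q.t p.1) = Q'.t p.2
  lift : ∀ (v w : Q.V) (e' : Q'.E), f0 v = Q'.h e' → f0 w = Q'.t e' →
    ∃! e : Q.E, (e, e') ∈ f1 ∧ Q.h e = v ∧ Q.t e = w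
  inj : ∀ p ∈ f1, ∀ q ∈ f1, p.1 = q.1 → p.2 = q.2

/-- Composition of relations. -/
def relComp {A B C : Type*} (r : Set (A × B)) (s : Set (B × C)) : Set (A × C) :=
  {p | ∃ b, (p.1, b) ∈ r ∧ (b, p.2) ∈ s}

/-- The diagonal relation. -/
def diagRel (A : Type*) : Set (A × A) := {p | p.1 = p.2}

/-- Transport a fibre of a representation along an equality of vertices. -/
def lcast {Q : QuiverData} (X : QRep Q) {a b : Q.V} (h : a = b) :
    X.carrier a →ₗ[ℂ] X.carrier b := by
  subst h; exact LinearMap.id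

/-- The carrier of the pushforward representation `Σ_λ X`:
`(Σ_λ X)_{v'} = ⊕_{v : λ₀(v) = v'} X_v`, realised as a finite product. -/
abbrev pushCarrier {Q Q' : QuiverData} (l : QMor Q Q') (X : QRep Q) (v' : Q'.V) : Type :=
  ∀ v : {v : Q.V // l.f0 v = v'}, X.carrier v.1

open scoped Classical in
/-- The edge maps of the pushforward representation:
`(Σ_λ X)_{e'} = ∑_{e : (e,e') ∈ λ₁} ρ_e`. -/
noncomputable def pushEdge {Q Q' : QuiverData} (l : QMor Q Q') (X : QRep Q) (e' : Q'.E) :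
    pushCarrier l X (Q'.t e') →ₗ[ℂ] pushCarrier l X (Q'.h e') :=
  LinearMap.pi (fun w : {w : Q.V // l.f0 w = Q'.h e'} =>
    ∑ a : Q.E,
      if h : (a, e') ∈ l.f1 ∧ Q.h a = w.1 then
        (lcast X h.2) ∘ₗ (X.edge a) ∘ₗ
          (LinearMap.proj (⟨Q.t a, (l.compat (a, e') h.1).2⟩ : {v : Q.V // l.f0 v = Q'.t e'}))
      else 0)

/-- The pushforward representation `Σ_λ X` of `X` along a quiver morphism `λ`. -/
noncomputable def pushRep {Q Q' : QuiverData} (l : QMor Q Q') (X : QRep Q) : QRep Q' where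
  carrier := pushCarrier l X
  acg := fun _ => inferInstance
  mod := fun _ => inferInstance
  fd := fun _ => inferInstance
  edge := pushEdge l X

/-- The pushforward of dimension vectors along a quiver morphism. -/
noncomputable def pushDim {Q Q' : QuiverData} (l : QMor Q Q') (d : Q.V → ℕ) : Q'.V → ℕ :=
  fun v' => ∑ v ∈ Finset.univ.filter (fun v => l.f0 v = v'), d v

open scoped Classical in
lemma pushEdge_apply {Q Q' : QuiverData} (l : QMor Q Q') (X : QRep Q) (e' : Q'.E)
    (x : pushCarrier l X (Q'.t e')) (w : {w : Q.V // l.f0 w = Q'.h e'}) :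
    pushEdge l X e' x w =
      ∑ a : Q.E,
        if h : (a, e') ∈ l.f1 ∧ Q.h a = w.1 then
          lcast X h.2 (X.edge a (x ⟨Q.t a, (l.compat (a, e') h.1).2⟩))
        else 0 := by
  classical
  rw [pushEdge, LinearMap.pi_apply, LinearMap.sum_apply]
  refine Finset.sum_congr rfl fun a _ => ?_
  by_cases h : (a, e') ∈ l.f1 ∧ Q.h a = w.1
  · rw [dif_pos h, dif_pos h]; rfl
  · rw [dif_neg h, dif_neg h, LinearMap.zero_apply]

lemma lcast_push_apply {Q Q' : QuiverData} (l : QMor Q Q') (X : QRep Q) {a b : Q'.V}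
    (h : a = b) (z : pushCarrier l X a) (w : {w : Q.V // l.f0 w = b}) :
    lcast (pushRep l X) h z w = z ⟨w.1, by rw [w.2, h]⟩ := by
  subst h; rfl

lemma pushRep_edge {Q Q' : QuiverData} (l : QMor Q Q') (X : QRep Q) (e' : Q'.E) :
    (pushRep l X).edge e' = pushEdge l X e' := rfl

/-- The reindexing linear equivalence between the composite pushforward carrier and
the iterated pushforward carrier. -/
def phiEquiv {Q Q' Q'' : QuiverData} (l : QMor Q Q') (m : QMor Q' Q'') (f : Q.V → Q''.V)
    (hf : ∀ v, f v = m.f0 (l.f0 v)) (X : QRep Q) (v'' : Q''.V) :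
    (∀ v : {v : Q.V // f v = v''}, X.carrier v.1) ≃ₗ[ℂ]
    (∀ w' : {w' : Q'.V // m.f0 w' = v''}, ∀ v : {v : Q.V // l.f0 v = w'.1}, X.carrier v.1) where
  toFun x := fun w' v => x ⟨v.1, by rw [hf, v.2]; exact w'.2⟩
  invFun y := fun v => y ⟨l.f0 v.1, by rw [← hf]; exact v.2⟩ ⟨v.1, rfl⟩
  map_add' _ _ := rfl
  map_smul' _ _ := rfl
  left_inv x := rfl
  right_inv y := by
    funext w' v
    obtain ⟨w', hw'⟩ := w'
    obtain ⟨v, hv⟩ := v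
    dsimp only at hv ⊢
    subst hv
    rfl

/-- For quiver morphisms `λ : Q → Q'`, `μ : Q' → Q''` and a
representation `(V,ρ)` of `Q`, the representations `Σ_{μ∘λ}(V,ρ)` and
`Σ_μ(Σ_λ(V,ρ))` of `Q''` are isomorphic; in particular `(μ∘λ)_* = μ_* ∘ λ_*` on
dimension vectors.  (Here `c` is the composite morphism `μ∘λ`, which is determined
by its data.) -/
theorem pushRep_comp (Q Q' Q'' : QuiverData) (l : QMor Q Q') (m : QMor Q' Q'')
    (c : QMor Q Q'') (hc0 : c.f0 = m.f0 ∘ l.f0)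
    (hc1 : c.f1 = {p : Q.E × Q''.E | ∃ e' : Q'.E, (p.1, e') ∈ l.f1 ∧ (e', p.2) ∈ m.f1})
    (X : QRep Q) :
    RepIso (pushRep c X) (pushRep m (pushRep l X)) ∧
    ∀ d : Q.V → ℕ, pushDim c d = pushDim m (pushDim l d) := by
  classical
  have hf : ∀ v, c.f0 v = m.f0 (l.f0 v) := fun v => congrFun hc0 v
  constructor
  · refine ⟨fun v'' => phiEquiv l m c.f0 hf X v'',
      fun e'' x => funext fun w' => funext fun w => ?_⟩
    have hmem : ∀ a : Q.E, ((a, e'') ∈ c.f1 ↔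
        ∃ e' : Q'.E, (a, e') ∈ l.f1 ∧ (e', e'') ∈ m.f1) := by
      intro a; rw [hc1]; exact Iff.rfl
    change pushCarrier c X (Q''.t e'') at x
    show pushEdge c X e'' x ⟨w.1, by rw [hf, w.2]; exact w'.2⟩
        = pushEdge m (pushRep l X) e'' ((phiEquiv l m c.f0 hf X (Q''.t e'')) x) w' w
    erw [pushEdge_apply, pushEdge_apply m (pushRep l X) e'' _ w', Finset.sum_apply]
    have hstep : ∀ e' : Q'.E,
        (if h : (e', e'') ∈ m.f1 ∧ Q'.h e' = w'.1 then
            lcast (pushRep l X) h.2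
              ((pushRep l X).edge e'
                ((phiEquiv l m c.f0 hf X (Q''.t e'')) x ⟨Q'.t e', (m.compat (e', e'') h.1).2⟩))
          else 0) w
        = ∑ a : Q.E,
            if h : ((e', e'') ∈ m.f1 ∧ (a, e') ∈ l.f1) ∧ Q.h a = w.1 then
              lcast X h.2 (X.edge a (x ⟨Q.t a, by
                rw [hf, (l.compat (a, e') h.1.2).2]
                exact (m.compat (e', e'') h.1.1).2⟩))
            else 0 := by
      intro e'
      by_cases hm' : (e', e'') ∈ m.f1 ∧ Q'.h e' = w'.1
      · erw [dif_pos hm', pushRep_edge, lcast_push_apply]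
        refine (pushEdge_apply l X e' _ _).trans ?_
        refine Finset.sum_congr rfl fun a _ => ?_
        by_cases hla : (a, e') ∈ l.f1 ∧ Q.h a = w.1
        · rw [dif_pos hla, dif_pos (⟨⟨hm'.1, hla.1⟩, hla.2⟩ :
            ((e', e'') ∈ m.f1 ∧ (a, e') ∈ l.f1) ∧ Q.h a = w.1)]
          rfl
        · rw [dif_neg (fun h => hla h), dif_neg (fun h => hla ⟨h.1.2, h.2⟩)]
      · erw [dif_neg hm', Pi.zero_apply]
        refine (Finset.sum_eq_zero fun a _ => ?_).symm
        rw [dif_neg]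
        rintro ⟨⟨h1, h2⟩, h3⟩
        exact hm' ⟨h1, by rw [← (l.compat (a, e') h2).1, h3, w.2]⟩
    rw [Finset.sum_congr rfl fun e' _ => hstep e', Finset.sum_comm]
    refine Finset.sum_congr rfl fun a _ => ?_
    by_cases hh : Q.h a = w.1
    · by_cases hex : ∃ e0 : Q'.E, (a, e0) ∈ l.f1 ∧ (e0, e'') ∈ m.f1
      · obtain ⟨e0, hl0, hm0⟩ := hex
        rw [dif_pos (⟨(hmem a).mpr ⟨e0, hl0, hm0⟩, hh⟩ :
          (a, e'') ∈ c.f1 ∧ Q.h a = w.1)]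
        rw [Finset.sum_eq_single e0 (fun e' _ hne => ?_)
          (fun h => absurd (Finset.mem_univ e0) h)]
        · rw [dif_pos (⟨⟨hm0, hl0⟩, hh⟩ :
            ((e0, e'') ∈ m.f1 ∧ (a, e0) ∈ l.f1) ∧ Q.h a = w.1)]
        · rw [dif_neg]
          rintro ⟨⟨h1, h2⟩, h3⟩
          exact hne (l.inj (a, e') h2 (a, e0) hl0 rfl)
      · rw [dif_neg (fun h => hex ((hmem a).mp h.1))]
        refine (Finset.sum_eq_zero fun e' _ => ?_).symm
        rw [dif_neg]
        rintro ⟨⟨h1, h2⟩, h3⟩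
        exact hex ⟨e', h2, h1⟩
    · rw [dif_neg (fun h => hh h.2)]
      refine (Finset.sum_eq_zero fun e' _ => ?_).symm
      exact dif_neg (fun h => hh h.2)
  · intro d
    funext v''
    simp only [pushDim, hc0, Function.comp_apply, Finset.sum_filter]
    have h1 : ∀ w' : Q'.V, (if m.f0 w' = v'' then ∑ v : Q.V, (if l.f0 v = w' then d v else 0) else 0)
        = ∑ v : Q.V, if l.f0 v = w' then (if m.f0 w' = v'' then d v else 0) else 0 := by
      intro w'
      split <;> simp [*]
    simp only [h1]
    rw [Finset.sum_comm]
    refine Finset.sum_congr rfl fun v _ => ?_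
    rw [Finset.sum_ite_eq]
    simp [Function.comp]
end
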